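/- arXiv:1801.05195 — 3 statements merged into one kernel-verified Lean document; each statement's English description precedes it below -/
import Mathlib

section
/- Extremal entropy for rainbow-triangle-free 3-colourings: Let P = (P_n) where P_n is the set of 3-colourings of K_n containing no rainbow triangle. Then for all n ≥ 3, ex(n,P) = log₃2 · C(n,2). Moreover, a 3-colouring template t for K_n with ⟨t⟩ ⊆ P_n satisfies Ent(t) = log₃2 · C(n,2) if and only if there exist two distinct colours c₁, c₂ ∈ {1,2,3} with t(e) = {c₁,c₂} for every edge e of K_n. -/
open Filter

abbrev Edge (n : ℕ) := {p : Fin n × Fin n // p.1 < p.2}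

abbrev Colouring (k n : ℕ) := Edge n → Fin k

abbrev Template (k n : ℕ) := Edge n → Finset (Fin k)

def Proper {k n : ℕ} (t : Template k n) : Prop := ∀ e, (t e).Nonempty

def Realises {k n : ℕ} (c : Colouring k n) (t : Template k n) : Prop := ∀ e, c e ∈ t e

noncomputable def Ent {k n : ℕ} (t : Template k n) : ℝ :=
  ∑ e : Edge n, Real.logb k ((t e).card)

def Edge.map {m n : ℕ} (φ : Fin m → Fin n) (h : StrictMono φ) (e : Edge m) : Edge n :=
  ⟨(φ e.1.1, φ e.1.2), h e.2⟩

def restrictC {k m n : ℕ} (c : Colouring k n) (φ : Fin m → Fin n) (h : StrictMono φ) :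
    Colouring k m := fun e => c (Edge.map φ h e)

def restrictT {k m n : ℕ} (t : Template k n) (φ : Fin m → Fin n) (h : StrictMono φ) :
    Template k m := fun e => t (Edge.map φ h e)

def Forb {k N : ℕ} (F : Set (Colouring k N)) (n : ℕ) : Set (Colouring k n) :=
  {c | ∀ (φ : Fin N → Fin n) (h : StrictMono φ), restrictC c φ h ∉ F}

def OrderHereditary {k : ℕ} (P : ∀ n, Set (Colouring k n)) : Prop :=
  ∀ (m n : ℕ) (φ : Fin m → Fin n) (h : StrictMono φ) (c : Colouring k n),
    c ∈ P n → restrictC c φ h ∈ P m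

noncomputable def exEnt {k n : ℕ} (A : Set (Colouring k n)) : ℝ :=
  sSup {x | ∃ t : Template k n, Proper t ∧ (∀ c, Realises c t → c ∈ A) ∧ Ent t = x}

noncomputable def badPairs {k N n : ℕ} (t : Template k n) (F : Set (Colouring k N)) : ℕ :=
  Set.ncard {p : (Fin N → Fin n) × Colouring k N |
    ∃ h : StrictMono p.1, p.2 ∈ F ∧ Realises p.2 (restrictT t p.1 h)}

def TemplateLE {k m n : ℕ} (t : Template k m) (t' : Template k n) : Prop :=
  ∃ (φ : Fin m → Fin n) (h : StrictMono φ), ∀ e, t e ⊆ restrictT t' φ h e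

def IsContainerFamily {k n : ℕ} (T : Finset (Template k n)) (A : Set (Colouring k n)) : Prop :=
  ∀ t : Template k n, Proper t → (∀ c, Realises c t → c ∈ A) → ∃ t' ∈ T, TemplateLE t t'

/-- The 3-colouring `c` of `E(K_n)` contains no rainbow triangle: for every triple
`x < y < z`, the three edge colours are not pairwise distinct. -/
def RainbowFree {n : ℕ} (c : Colouring 3 n) : Prop :=
  ∀ (x y z : Fin n) (hxy : x < y) (hyz : y < z),
    c ⟨(x, y), hxy⟩ = c ⟨(y, z), hyz⟩ ∨
    c ⟨(y, z), hyz⟩ = c ⟨(x, z), hxy.trans hyz⟩ ∨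
    c ⟨(x, y), hxy⟩ = c ⟨(x, z), hxy.trans hyz⟩

namespace RFaux

/-! ### basic counting -/

def edgeEquiv (n : ℕ) : Edge n ≃ Σ j : Fin n, Fin j.val where
  toFun e := ⟨e.1.2, ⟨e.1.1.val, e.2⟩⟩
  invFun p := ⟨(⟨p.2.val, lt_trans p.2.isLt p.1.isLt⟩, p.1), p.2.isLt⟩
  left_inv e := by ext <;> rfl
  right_inv p := by ext <;> rfl

lemma card_edge (n : ℕ) : Fintype.card (Edge n) = n.choose 2 := by
  rw [Fintype.card_congr (edgeEquiv n), Fintype.card_sigma]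
  simp only [Fintype.card_fin]
  rw [Fin.sum_univ_eq_sum_range (fun i => i) n, Finset.sum_range_id, Nat.choose_two_right]

/-! ### the triangle condition -/

abbrev NR (A B C : Finset (Fin 3)) : Prop :=
  ∀ a ∈ A, ∀ b ∈ B, ∀ c ∈ C, a = b ∨ b = c ∨ a = c

set_option synthInstance.maxSize 4000 in
set_option maxHeartbeats 2000000 in
lemma triDec : ∀ A B C : Finset (Fin 3), NR A B C →
    A.Nonempty → B.Nonempty → C.Nonempty →
    ((A.card = 3 → B.card ≤ 1 ∧ C.card ≤ 1) ∧
     (B.card = 3 → A.card ≤ 1 ∧ C.card ≤ 1) ∧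
     (C.card = 3 → A.card ≤ 1 ∧ B.card ≤ 1) ∧
     (A.card = 2 → B.card = 2 → C.card = 2 → A = B ∧ B = C)) := by decide

/-! ### sorted edges -/

def emk {n : ℕ} (u v : Fin n) (h : u ≠ v) : Edge n :=
  if hlt : u < v then ⟨(u, v), hlt⟩ else ⟨(v, u), (h.lt_or_gt).resolve_left hlt⟩

lemma emk_eq {n : ℕ} {u v : Fin n} (hlt : u < v) (h : u ≠ v) :
    emk u v h = ⟨(u, v), hlt⟩ := by
  simp [emk, hlt]

lemma emk_comm {n : ℕ} (u v : Fin n) (h : u ≠ v) :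
    emk u v h = emk v u h.symm := by
  unfold emk
  rcases h.lt_or_gt with hlt | hlt
  · rw [dif_pos hlt, dif_neg (asymm hlt)]
  · rw [dif_neg (asymm hlt), dif_pos hlt]

variable {n : ℕ} {t : Template 3 n}

/-! ### the key triangle lemma -/

lemma key (hp : Proper t) (hr : ∀ c, Realises c t → RainbowFree c)
    {x y z : Fin n} (hxy : x < y) (hyz : y < z) :
    NR (t ⟨(x,y),hxy⟩) (t ⟨(y,z),hyz⟩) (t ⟨(x,z),hxy.trans hyz⟩) := by
  classical
  intro a ha b hb c hc
  set exy : Edge n := ⟨(x,y),hxy⟩ with hexy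
  set eyz : Edge n := ⟨(y,z),hyz⟩ with heyz
  set exz : Edge n := ⟨(x,z),hxy.trans hyz⟩ with hexz
  have hne1 : eyz ≠ exy := fun h => (ne_of_lt hxy) (congrArg (fun e : Edge n => e.1.1) h).symm
  have hne2 : exz ≠ exy := fun h => (ne_of_lt hyz) (congrArg (fun e : Edge n => e.1.2) h).symm
  have hne3 : exz ≠ eyz := fun h => (ne_of_lt hxy) (congrArg (fun e : Edge n => e.1.1) h)
  set c' : Colouring 3 n := fun e =>
    if e = exy then a else if e = eyz then b else if e = exz then c else (hp e).choose with hc'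
  have hreal : Realises c' t := by
    intro e
    by_cases h1 : e = exy
    · subst h1; simpa [c'] using ha
    · by_cases h2 : e = eyz
      · subst h2; simpa [c', hne1] using hb
      · by_cases h3 : e = exz
        · subst h3; simpa [c', hne2, hne3] using hc
        · simpa [c', h1, h2, h3] using (hp e).choose_spec
  have h := hr c' hreal x y z hxy hyz
  have e1 : c' exy = a := by simp [c']
  have e2 : c' eyz = b := by simp [c', hne1]
  have e3 : c' exz = c := by simp [c', hne2, hne3]
  rw [← hexy, ← heyz, ← hexz, e1, e2, e3] at h
  exact h

lemma keyAll (hp : Proper t) (hr : ∀ c, Realises c t → RainbowFree c)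
    {u v w : Fin n} (huv : u ≠ v) (hvw : v ≠ w) (huw : u ≠ w) :
    NR (t (emk u v huv)) (t (emk v w hvw)) (t (emk u w huw)) := by
  intro a ha b hb c hc
  rcases huv.lt_or_gt with h1 | h1 <;> rcases hvw.lt_or_gt with h2 | h2 <;>
    rcases huw.lt_or_gt with h3 | h3
  · -- u<v<w
    rw [emk_eq h1] at ha; rw [emk_eq h2] at hb; rw [emk_eq h3] at hc
    have := key hp hr h1 h2 a ha b hb c hc; tauto
  · exact absurd (h1.trans h2) (asymm h3)
  · -- u<v, w<v, u<w : u<w<v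
    rw [emk_eq h1] at ha; rw [emk_comm, emk_eq h2] at hb; rw [emk_eq h3] at hc
    have := key hp hr h3 h2 c hc b hb a ha; tauto
  · -- u<v, w<v, w<u : w<u<v
    rw [emk_eq h1] at ha; rw [emk_comm, emk_eq h2] at hb; rw [emk_comm, emk_eq h3] at hc
    have := key hp hr h3 h1 c hc a ha b hb; tauto
  · -- v<u, v<w, u<w : v<u<w
    rw [emk_comm, emk_eq h1] at ha; rw [emk_eq h2] at hb; rw [emk_eq h3] at hc
    have := key hp hr h1 h3 a ha c hc b hb; tauto
  · -- v<u, v<w, w<u : v<w<u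
    rw [emk_comm, emk_eq h1] at ha; rw [emk_eq h2] at hb; rw [emk_comm, emk_eq h3] at hc
    have := key hp hr h2 h3 b hb c hc a ha; tauto
  · exact absurd (h2.trans h1) (asymm h3)
  · -- v<u, w<v : w<v<u
    rw [emk_comm, emk_eq h1] at ha; rw [emk_comm, emk_eq h2] at hb; rw [emk_comm, emk_eq h3] at hc
    have := key hp hr h2 h1 b hb a ha c hc; tauto


lemma adj (hp : Proper t) (hr : ∀ c, Realises c t → RainbowFree c)
    {e e' : Edge n} (hne : e ≠ e')
    (hsh : e.1.1 = e'.1.1 ∨ e.1.1 = e'.1.2 ∨ e.1.2 = e'.1.1 ∨ e.1.2 = e'.1.2)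
    (h3 : (t e).card = 3) : (t e').card ≤ 1 := by
  obtain ⟨⟨a, b⟩, hab⟩ := e
  obtain ⟨⟨u, v⟩, huv⟩ := e'
  simp only at hsh h3 ⊢
  rcases hsh with h | h | h | h
  · -- a = u
    subst h
    have hbv : b ≠ v := by
      intro h; subst h; exact hne rfl
    have H := keyAll hp hr (ne_of_lt hab) hbv (ne_of_lt huv)
    rw [emk_eq hab, emk_eq huv] at H
    exact ((triDec _ _ _ H (hp _) (hp _) (hp _)).1 h3).2
  · -- a = v
    subst h
    have H := keyAll hp hr (ne_of_lt huv) (ne_of_lt hab) (ne_of_lt (huv.trans hab))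
    rw [emk_eq huv, emk_eq hab] at H
    exact ((triDec _ _ _ H (hp _) (hp _) (hp _)).2.1 h3).1
  · -- b = u
    subst h
    have H := keyAll hp hr (ne_of_lt hab) (ne_of_lt huv) (ne_of_lt (hab.trans huv))
    rw [emk_eq hab, emk_eq huv] at H
    exact ((triDec _ _ _ H (hp _) (hp _) (hp _)).1 h3).1
  · -- b = v
    subst h
    have hau : a ≠ u := by
      intro h; subst h; exact hne rfl
    have H := keyAll hp hr hau (ne_of_lt huv) (ne_of_lt hab)
    rw [emk_eq huv, emk_eq hab] at H
    exact ((triDec _ _ _ H (hp _) (hp _) (hp _)).2.2.1 h3).2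
/-! ### numeric logb facts -/

lemma c2pos : 0 < Real.logb 3 2 := Real.logb_pos (by norm_num) (by norm_num)

lemma one_lt_two_c2 : 1 < 2 * Real.logb 3 2 := by
  have h4 : Real.logb 3 4 = 2 * Real.logb 3 2 := by
    rw [show (4:ℝ) = 2*2 by norm_num, Real.logb_mul two_ne_zero two_ne_zero]; ring
  have h34 : Real.logb 3 3 < Real.logb 3 4 :=
    Real.logb_lt_logb (by norm_num) (by norm_num) (by norm_num)
  have h33 : Real.logb 3 3 = 1 := Real.logb_self_eq_one (by norm_num)
  linarith

lemma card_le3 (A : Finset (Fin 3)) : A.card ≤ 3 := by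
  have := A.card_le_univ
  simpa using this

lemma ent_eq {n : ℕ} (t : Template 3 n) :
    Ent t = ∑ e : Edge n, Real.logb 3 ((t e).card) := by
  unfold Ent; norm_num

/-! ### the auxiliary edge map σ -/

def sig {n : ℕ} (hn : 3 ≤ n) (e : Edge n) : Edge n :=
  if h2 : e.val.2.val = 1 then
    ⟨(⟨1, by omega⟩, ⟨2, by omega⟩), by simp [Fin.lt_def]⟩
  else if h1 : e.val.1.val = 0 then
    ⟨(⟨1, by omega⟩, e.val.2), by
      have h := e.2; simp only [Fin.lt_def] at h ⊢; omega⟩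
  else
    ⟨(⟨0, by omega⟩, e.val.2), by
      have h := e.2; simp only [Fin.lt_def] at h ⊢; omega⟩

lemma sig_ne {n : ℕ} (hn : 3 ≤ n) (e : Edge n) : sig hn e ≠ e := by
  have hlt := Fin.lt_def.mp e.2
  unfold sig
  split_ifs with h2 h1 <;> intro h <;>
    have hv := congrArg (fun e : Edge n => e.val.1.val) h <;> simp at hv <;> omega

lemma sig_share {n : ℕ} (hn : 3 ≤ n) (e : Edge n) :
    e.val.1 = (sig hn e).val.1 ∨ e.val.1 = (sig hn e).val.2 ∨
    e.val.2 = (sig hn e).val.1 ∨ e.val.2 = (sig hn e).val.2 := by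
  unfold sig
  split_ifs with h2 h1
  · right; right; left; exact Fin.ext (by simpa using h2)
  · right; right; right; rfl
  · right; right; right; rfl

lemma sig_inj2 {n : ℕ} (hn : 3 ≤ n) {a b : Edge n}
    (h11 : a.val.1 ≠ b.val.1) (h12 : a.val.1 ≠ b.val.2)
    (h21 : a.val.2 ≠ b.val.1) (h22 : a.val.2 ≠ b.val.2) :
    sig hn a ≠ sig hn b := by
  have ha := Fin.lt_def.mp a.2
  have hb := Fin.lt_def.mp b.2
  have h11' : a.val.1.val ≠ b.val.1.val := fun h => h11 (Fin.ext h)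
  have h12' : a.val.1.val ≠ b.val.2.val := fun h => h12 (Fin.ext h)
  have h21' : a.val.2.val ≠ b.val.1.val := fun h => h21 (Fin.ext h)
  have h22' : a.val.2.val ≠ b.val.2.val := fun h => h22 (Fin.ext h)
  unfold sig
  split_ifs <;> intro h <;>
    have hv1 := congrArg (fun e : Edge n => e.val.1.val) h <;>
    have hv2 := congrArg (fun e : Edge n => e.val.2.val) h <;>
    simp at hv1 hv2 <;> omega

variable {n : ℕ} {t : Template 3 n}

lemma B3_disj (hp : Proper t) (hr : ∀ c, Realises c t → RainbowFree c)
    {e e' : Edge n} (he : (t e).card = 3) (he' : (t e').card = 3) (hne : e ≠ e') :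
    e.val.1 ≠ e'.val.1 ∧ e.val.1 ≠ e'.val.2 ∧ e.val.2 ≠ e'.val.1 ∧ e.val.2 ≠ e'.val.2 := by
  refine ⟨?_, ?_, ?_, ?_⟩ <;> intro h <;>
    have hc := adj hp hr hne (by tauto) he <;> omega

/-! ### the upper bound and equality characterisation -/

lemma upper (hn : 3 ≤ n) (hp : Proper t) (hr : ∀ c, Realises c t → RainbowFree c) :
    Ent t ≤ Real.logb 3 2 * (n.choose 2 : ℝ) ∧
    (Ent t = Real.logb 3 2 * (n.choose 2 : ℝ) →
      ∃ c₁ c₂ : Fin 3, c₁ ≠ c₂ ∧ ∀ e : Edge n, t e = {c₁, c₂}) := by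
  classical
  have hcard1 : ∀ e, 0 < (t e).card := fun e => Finset.card_pos.mpr (hp e)
  by_cases hB : ∀ e, (t e).card ≤ 2
  · -- Case A : every edge set has at most two colours
    have hle : ∀ e : Edge n, Real.logb 3 ((t e).card) ≤ Real.logb 3 2 := fun e =>
      Real.logb_le_logb_of_le (by norm_num) (by exact_mod_cast hcard1 e) (by exact_mod_cast hB e)
    have hconstsum : ∑ _e : Edge n, Real.logb 3 2 = Real.logb 3 2 * (n.choose 2 : ℝ) := by
      rw [Finset.sum_const, Finset.card_univ, card_edge, nsmul_eq_mul]; ring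
    have hsum : Ent t ≤ Real.logb 3 2 * (n.choose 2 : ℝ) := by
      rw [ent_eq t, ← hconstsum]
      exact Finset.sum_le_sum (fun e _ => hle e)
    refine ⟨hsum, ?_⟩
    intro heq
    have hall2 : ∀ e : Edge n, (t e).card = 2 := by
      have hsum_eq : ∑ e : Edge n, Real.logb 3 ((t e).card) = ∑ _e : Edge n, Real.logb 3 2 := by
        rw [← ent_eq t, heq, hconstsum]
      have hterm := (Finset.sum_eq_sum_iff_of_le (fun e _ => hle e)).mp hsum_eq
      intro e
      have he := hterm e (Finset.mem_univ e)
      rcases (by have := hB e; have := hcard1 e; omega : (t e).card = 1 ∨ (t e).card = 2) with h1 | h2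
      · exfalso
        rw [h1] at he
        simp only [Nat.cast_one, Real.logb_one] at he
        exact absurd he.symm (ne_of_gt c2pos)
      · exact h2
    have tri_eq : ∀ (u v w : Fin n) (huv : u ≠ v) (hvw : v ≠ w) (huw : u ≠ w),
        t (emk u v huv) = t (emk v w hvw) ∧ t (emk v w hvw) = t (emk u w huw) :=
      fun u v w huv hvw huw =>
        (triDec _ _ _ (keyAll hp hr huv hvw huw) (hp _) (hp _) (hp _)).2.2.2
          (hall2 _) (hall2 _) (hall2 _)
    have h0n : 0 < n := by omega
    have h1n : 1 < n := by omega
    have h01 : (⟨0, h0n⟩ : Fin n) ≠ ⟨1, h1n⟩ := by simp [Fin.ext_iff]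
    have claim1 : ∀ (z : Fin n) (hz : (⟨0, h0n⟩ : Fin n) ≠ z),
        t (emk ⟨0, h0n⟩ z hz) = t (emk ⟨0, h0n⟩ ⟨1, h1n⟩ h01) := by
      intro z hz
      by_cases h1z : z = ⟨1, h1n⟩
      · subst h1z; rfl
      · have h1z' : (⟨1, h1n⟩ : Fin n) ≠ z := fun h => h1z h.symm
        obtain ⟨e1, e2⟩ := tri_eq ⟨0, h0n⟩ ⟨1, h1n⟩ z h01 h1z' hz
        rw [← e2, ← e1]
    have hconst : ∀ e : Edge n, t e = t (emk ⟨0, h0n⟩ ⟨1, h1n⟩ h01) := by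
      intro e
      obtain ⟨⟨x, y⟩, hxy⟩ := e
      have hxyne : x ≠ y := ne_of_lt hxy
      have hrw : (⟨(x, y), hxy⟩ : Edge n) = emk x y hxyne := (emk_eq hxy _).symm
      rw [hrw]
      by_cases hx : (⟨0, h0n⟩ : Fin n) = x
      · subst hx
        exact claim1 y hxyne
      · have hy0 : (⟨0, h0n⟩ : Fin n) ≠ y := by
          intro h
          have hv := Fin.lt_def.mp hxy
          rw [← h] at hv
          simp at hv
        obtain ⟨e1, e2⟩ := tri_eq ⟨0, h0n⟩ x y hx hxyne hy0
        rw [← e1]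
        exact claim1 x hx
    obtain ⟨c₁, c₂, hnec, hKeq⟩ := Finset.card_eq_two.mp (hall2 (emk ⟨0, h0n⟩ ⟨1, h1n⟩ h01))
    exact ⟨c₁, c₂, hnec, fun e => by rw [hconst e, hKeq]⟩
  · -- Case B : some edge has all three colours; entropy is strictly smaller
    push_neg at hB
    obtain ⟨e0, he0⟩ := hB
    have he03 : (t e0).card = 3 := le_antisymm (card_le3 _) he0
    suffices h : Ent t < Real.logb 3 2 * (n.choose 2 : ℝ) by
      exact ⟨le_of_lt h, fun heq => absurd heq (ne_of_lt h)⟩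
    set B3 : Finset (Edge n) := Finset.univ.filter (fun e => (t e).card = 3) with hB3
    set Im : Finset (Edge n) := B3.image (sig hn) with hIm
    have hmem3 : ∀ e ∈ B3, (t e).card = 3 := fun e he => (Finset.mem_filter.mp he).2
    have hImle : ∀ e ∈ Im, (t e).card ≤ 1 := by
      intro e he
      obtain ⟨e1, he1, rfl⟩ := Finset.mem_image.mp he
      exact adj hp hr (sig_ne hn e1).symm (sig_share hn e1) (hmem3 e1 he1)
    have hdisjBI : ∀ e ∈ B3, e ∉ Im := by
      intro e he hin
      have h1 := hImle e hin
      have h2 := hmem3 e he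
      omega
    have hinj : Set.InjOn (sig hn) B3 := by
      intro a ha b hb hab
      by_contra hne
      obtain ⟨d1, d2, d3, d4⟩ := B3_disj hp hr (hmem3 a ha) (hmem3 b hb) hne
      exact sig_inj2 hn d1 d2 d3 d4 hab
    have hImcard : Im.card = B3.card := Finset.card_image_of_injOn hinj
    have hpoint : ∀ e : Edge n, Real.logb 3 ((t e).card) ≤
        Real.logb 3 2 + ((if e ∈ B3 then 1 - Real.logb 3 2 else 0) +
          (if e ∈ Im then -Real.logb 3 2 else 0)) := by
      intro e
      by_cases h1 : e ∈ B3
      · rw [if_pos h1, if_neg (hdisjBI e h1), hmem3 e h1]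
        have h3 : Real.logb 3 ((3:ℕ):ℝ) = 1 := by norm_num
        linarith [h3]
      · by_cases h2 : e ∈ Im
        · rw [if_neg h1, if_pos h2]
          have hc1 : (t e).card = 1 := le_antisymm (hImle e h2) (hcard1 e)
          rw [hc1]
          simp
        · rw [if_neg h1, if_neg h2]
          have hne3 : (t e).card ≠ 3 := by
            intro h; exact h1 (Finset.mem_filter.mpr ⟨Finset.mem_univ e, h⟩)
          have hle2 : (t e).card ≤ 2 := by
            have := card_le3 (t e); omega
          have := Real.logb_le_logb_of_le (b := 3) (by norm_num)
            (by exact_mod_cast hcard1 e) (by exact_mod_cast hle2 : ((t e).card : ℝ) ≤ 2)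
          linarith
    have hsum := Finset.sum_le_sum (fun e (_ : e ∈ Finset.univ) => hpoint e)
    rw [ent_eq t]
    have hcalc : ∑ e : Edge n, (Real.logb 3 2 + ((if e ∈ B3 then 1 - Real.logb 3 2 else 0) +
          (if e ∈ Im then -Real.logb 3 2 else 0)))
        = Real.logb 3 2 * (n.choose 2 : ℝ)
          + ((B3.card : ℝ) * (1 - Real.logb 3 2) + (Im.card : ℝ) * (-Real.logb 3 2)) := by
      rw [Finset.sum_add_distrib, Finset.sum_add_distrib,
        Fintype.sum_ite_mem, Fintype.sum_ite_mem,
        Finset.sum_const, Finset.sum_const, Finset.sum_const, Finset.card_univ, card_edge]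
      simp only [nsmul_eq_mul]
      ring
    have hB3card : 1 ≤ (B3.card : ℝ) := by
      have : e0 ∈ B3 := Finset.mem_filter.mpr ⟨Finset.mem_univ e0, he03⟩
      have := Finset.card_pos.mpr ⟨e0, this⟩
      exact_mod_cast this
    have h2c2 := one_lt_two_c2
    calc ∑ e : Edge n, Real.logb 3 ((t e).card)
        ≤ _ := hsum
      _ = Real.logb 3 2 * (n.choose 2 : ℝ)
          + ((B3.card : ℝ) * (1 - Real.logb 3 2) + (Im.card : ℝ) * (-Real.logb 3 2)) := hcalc
      _ < Real.logb 3 2 * (n.choose 2 : ℝ) := by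
          rw [hImcard]
          have hmul : (B3.card : ℝ) * (1 - 2 * Real.logb 3 2) ≤
              1 * (1 - 2 * Real.logb 3 2) :=
            mul_le_mul_of_nonpos_right hB3card (by linarith)
          nlinarith
/-! ### the constant two-colour template -/

lemma two_colour_rainbow_free {n : ℕ} {t : Template 3 n} {c₁ c₂ : Fin 3}
    (ht : ∀ e : Edge n, t e = {c₁, c₂}) :
    ∀ c, Realises c t → RainbowFree c := by
  intro c hc x y z hxy hyz
  have key0 : ∀ (c₁ c₂ : Fin 3), ∀ a ∈ ({c₁, c₂} : Finset (Fin 3)),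
      ∀ b ∈ ({c₁, c₂} : Finset (Fin 3)), ∀ d ∈ ({c₁, c₂} : Finset (Fin 3)),
      a = b ∨ b = d ∨ a = d := by decide
  have h1 := hc ⟨(x, y), hxy⟩
  have h2 := hc ⟨(y, z), hyz⟩
  have h3 := hc ⟨(x, z), hxy.trans hyz⟩
  rw [ht] at h1 h2 h3
  exact key0 c₁ c₂ _ h1 _ h2 _ h3

lemma two_colour_ent {n : ℕ} {t : Template 3 n} {c₁ c₂ : Fin 3} (hne : c₁ ≠ c₂)
    (ht : ∀ e : Edge n, t e = {c₁, c₂}) :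
    Ent t = Real.logb 3 2 * (n.choose 2 : ℝ) := by
  rw [ent_eq]
  have hcard : ({c₁, c₂} : Finset (Fin 3)).card = 2 := Finset.card_pair hne
  have : ∀ e : Edge n, Real.logb 3 ((t e).card) = Real.logb 3 2 := by
    intro e; rw [ht e, hcard]; norm_num
  rw [Finset.sum_congr rfl (fun e _ => this e), Finset.sum_const, Finset.card_univ,
    card_edge, nsmul_eq_mul]
  ring

end RFaux


/-- Extremal entropy for rainbow-triangle-free 3-colourings (Theorem 4.13), together
with the characterisation of the extremal templates. -/
theorem rainbow_free_extremal_entropy (n : ℕ) (hn : 3 ≤ n) :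
    exEnt {c : Colouring 3 n | RainbowFree c} = Real.logb 3 2 * (n.choose 2 : ℝ) ∧
    ∀ t : Template 3 n, Proper t → (∀ c, Realises c t → RainbowFree c) →
      (Ent t = Real.logb 3 2 * (n.choose 2 : ℝ) ↔
        ∃ c₁ c₂ : Fin 3, c₁ ≠ c₂ ∧ ∀ e : Edge n, t e = {c₁, c₂}) := by
  classical
  constructor
  · -- value of exEnt
    have hmem : Real.logb 3 2 * (n.choose 2 : ℝ) ∈
        {x | ∃ t : Template 3 n, Proper t ∧
          (∀ c, Realises c t → c ∈ {c : Colouring 3 n | RainbowFree c}) ∧ Ent t = x} := by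
      refine ⟨fun _ => ({0, 1} : Finset (Fin 3)), ?_, ?_, ?_⟩
      · intro e; exact ⟨0, by simp⟩
      · exact RFaux.two_colour_rainbow_free (fun _ => rfl)
      · exact RFaux.two_colour_ent (by decide) (fun _ => rfl)
    have hub : ∀ x ∈ {x | ∃ t : Template 3 n, Proper t ∧
        (∀ c, Realises c t → c ∈ {c : Colouring 3 n | RainbowFree c}) ∧ Ent t = x},
        x ≤ Real.logb 3 2 * (n.choose 2 : ℝ) := by
      rintro x ⟨t, hp, hr, rfl⟩
      exact (RFaux.upper hn hp hr).1
    exact le_antisymm (csSup_le ⟨_, hmem⟩ hub)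
      (le_csSup ⟨_, hub⟩ hmem)
  · intro t hp hr
    constructor
    · exact (RFaux.upper hn hp hr).2
    · rintro ⟨c₁, c₂, hne, hconst⟩
      exact RFaux.two_colour_ent hne hconst
end

section
/- Stability for rainbow-triangle-free 3-colourings: For every ε > 0 there exist δ > 0 and n₀ ∈ ℕ such that the following holds. If n ≥ n₀ and t is a 3-colouring template for K_n satisfying (i) Ent(t) ≥ (log₃2 − δ)·C(n,2) and (ii) the number of triples {x,y,z} ⊆ [n] for which some choice of colours from the palettes t({x,y}), t({y,z}), t({x,z}) yields a rainbow triangle is at most δ·C(n,3), then there exist two distinct colours c₁, c₂ ∈ {1,2,3} such that t(e) = {c₁,c₂} for all but at most ε·C(n,2) edges e of K_n. -/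
open Filter

/-- The number of triples `x < y < z` for which some choice of colours from the palettes
of the template `t` on the three edges of the triangle yields a rainbow triangle. -/
noncomputable def rainbowTriples {n : ℕ} (t : Template 3 n) : ℕ :=
  Set.ncard {p : Fin n × Fin n × Fin n |
    ∃ (hxy : p.1 < p.2.1) (hyz : p.2.1 < p.2.2),
      ∃ a ∈ t ⟨(p.1, p.2.1), hxy⟩, ∃ b ∈ t ⟨(p.2.1, p.2.2), hyz⟩,
        ∃ d ∈ t ⟨(p.1, p.2.2), hxy.trans hyz⟩, a ≠ b ∧ b ≠ d ∧ a ≠ d}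

open Finset
set_option synthInstance.maxSize 400
set_option maxHeartbeats 1000000

def RbP (A B C : Finset (Fin 3)) : Prop :=
  ∃ a ∈ A, ∃ b ∈ B, ∃ d ∈ C, a ≠ b ∧ b ≠ d ∧ a ≠ d

-- sorted pair/triple extensionality helpers
lemma pair_ext {n : ℕ} {u v u' v' : Fin n} (h1 : u < v) (h2 : u' < v')
    (h : ({u, v} : Finset (Fin n)) = {u', v'}) : u = u' ∧ v = v' := by
  have hu : u ∈ ({u', v'} : Finset (Fin n)) := h ▸ (by simp)
  have hv : v ∈ ({u', v'} : Finset (Fin n)) := h ▸ (by simp)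
  have hu' : u' ∈ ({u, v} : Finset (Fin n)) := h ▸ (by simp)
  have hv' : v' ∈ ({u, v} : Finset (Fin n)) := h ▸ (by simp)
  simp only [mem_insert, mem_singleton] at hu hv hu' hv'
  simp only [Fin.lt_def] at h1 h2
  simp only [Fin.ext_iff] at hu hv hu' hv' ⊢
  omega

lemma triple_ext {n : ℕ} {x y z x' y' z' : Fin n} (h1 : x < y) (h2 : y < z)
    (h1' : x' < y') (h2' : y' < z')
    (h : ({x, y, z} : Finset (Fin n)) = {x', y', z'}) : x = x' ∧ y = y' ∧ z = z' := by
  have hx : x ∈ ({x', y', z'} : Finset (Fin n)) := h ▸ (by simp)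
  have hy : y ∈ ({x', y', z'} : Finset (Fin n)) := h ▸ (by simp)
  have hz : z ∈ ({x', y', z'} : Finset (Fin n)) := h ▸ (by simp)
  have hx' : x' ∈ ({x, y, z} : Finset (Fin n)) := h ▸ (by simp)
  have hy' : y' ∈ ({x, y, z} : Finset (Fin n)) := h ▸ (by simp)
  have hz' : z' ∈ ({x, y, z} : Finset (Fin n)) := h ▸ (by simp)
  simp only [mem_insert, mem_singleton] at hx hy hz hx' hy' hz'
  simp only [Fin.lt_def] at h1 h2 h1' h2'
  simp only [Fin.ext_iff] at hx hy hz hx' hy' hz' ⊢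
  omega

lemma exists_sorted_pair {n : ℕ} (a b : Fin n) (hab : a ≠ b) :
    ∃ u v : Fin n, u < v ∧ ({a, b} : Finset (Fin n)) = {u, v} := by
  rcases lt_or_gt_of_ne hab with h | h
  · exact ⟨a, b, h, rfl⟩
  · exact ⟨b, a, h, by ext w; simp; tauto⟩

lemma exists_sorted_triple {n : ℕ} (a b c : Fin n) (hab : a ≠ b) (hac : a ≠ c) (hbc : b ≠ c) :
    ∃ x y z : Fin n, x < y ∧ y < z ∧ ({a, b, c} : Finset (Fin n)) = {x, y, z} := by
  rcases lt_or_gt_of_ne hab with h1 | h1 <;>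
  rcases lt_or_gt_of_ne hac with h2 | h2 <;>
  rcases lt_or_gt_of_ne hbc with h3 | h3
  · exact ⟨a, b, c, h1, h3, rfl⟩
  · exact ⟨a, c, b, h2, h3, by ext w; simp; tauto⟩
  · exact ⟨c, a, b, h2, h1, by ext w; simp; tauto⟩
  · exact ⟨c, a, b, h2, h1, by ext w; simp; tauto⟩
  · exact ⟨b, a, c, h1, h2, by ext w; simp; tauto⟩
  · exact absurd (h2.trans h3) (lt_asymm h1)
  · exact ⟨b, c, a, h3, h2, by ext w; simp; tauto⟩
  · exact ⟨c, b, a, h3, h1, by ext w; simp; tauto⟩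

def triF (n : ℕ) : Finset (Fin n × Fin n × Fin n) :=
  univ.filter fun p => p.1 < p.2.1 ∧ p.2.1 < p.2.2

lemma card_edge_univ (n : ℕ) : (univ : Finset (Edge n)).card = n.choose 2 := by
  have hpc : (Finset.powersetCard 2 (univ : Finset (Fin n))).card = n.choose 2 := by
    rw [Finset.card_powersetCard, Finset.card_fin]
  rw [← hpc]
  exact Finset.card_nbij (fun e => {e.1.1, e.1.2})
      (fun e _ => by
        simp only [mem_coe, mem_powersetCard]
        exact ⟨subset_univ _, card_pair e.2.ne⟩)
      (fun e _ e' _ h => by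
        obtain ⟨h1, h2⟩ := pair_ext e.2 e'.2 h
        exact Subtype.ext (Prod.ext h1 h2))
      (fun s hs => by
        simp only [Finset.mem_coe, Finset.mem_powersetCard] at hs
        obtain ⟨-, hcard⟩ := hs
        obtain ⟨a, b, hab, rfl⟩ := Finset.card_eq_two.1 hcard
        obtain ⟨u, v, huv, hset⟩ := exists_sorted_pair a b hab
        exact ⟨⟨(u, v), huv⟩, by simp, hset.symm⟩)

lemma card_triF (n : ℕ) : (triF n).card = n.choose 3 := by
  have hpc : (Finset.powersetCard 3 (univ : Finset (Fin n))).card = n.choose 3 := by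
    rw [Finset.card_powersetCard, Finset.card_fin]
  rw [← hpc]
  exact Finset.card_nbij (fun p => {p.1, p.2.1, p.2.2})
      (fun p hp => by
        simp only [mem_coe, triF, mem_filter] at hp
        obtain ⟨-, h1, h2⟩ := hp
        simp only [mem_coe, mem_powersetCard]
        refine ⟨subset_univ _, ?_⟩
        rw [card_insert_of_notMem (by simp [h1.ne, (h1.trans h2).ne]), card_pair h2.ne])
      (fun p hp p' hp' h => by
        simp only [coe_filter, Set.mem_setOf_eq, triF, mem_coe, mem_filter] at hp hp'
        obtain ⟨h1, h2, h3⟩ := triple_ext hp.2.1 hp.2.2 hp'.2.1 hp'.2.2 h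
        exact Prod.ext h1 (Prod.ext h2 h3))
      (fun s hs => by
        simp only [Finset.mem_coe, Finset.mem_powersetCard] at hs
        obtain ⟨-, hcard⟩ := hs
        obtain ⟨a, b, c, hab, hac, hbc, rfl⟩ := Finset.card_eq_three.1 hcard
        obtain ⟨x, y, z, hxy, hyz, hset⟩ := exists_sorted_triple a b c hab hac hbc
        exact ⟨(x, y, z), by simp [triF, hxy, hyz], hset.symm⟩)


-- Rainbow existence predicate on three palettes
instance (A B C : Finset (Fin 3)) : Decidable (RbP A B C) := by unfold RbP; infer_instance

lemma rbp_perm {A B C : Finset (Fin 3)} (h : RbP A B C) :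
    RbP A B C ∧ RbP B A C ∧ RbP A C B ∧ RbP C B A ∧ RbP B C A ∧ RbP C A B := by
  obtain ⟨a, ha, b, hb, d, hd, h1, h2, h3⟩ := h
  refine ⟨⟨a, ha, b, hb, d, hd, h1, h2, h3⟩, ⟨b, hb, a, ha, d, hd, ?_⟩,
    ⟨a, ha, d, hd, b, hb, ?_⟩, ⟨d, hd, b, hb, a, ha, ?_⟩,
    ⟨b, hb, d, hd, a, ha, ?_⟩, ⟨d, hd, a, ha, b, hb, ?_⟩⟩ <;> tauto

lemma card2_cases (A : Finset (Fin 3)) (h : A.card = 2) :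
    A = {0, 1} ∨ A = {0, 2} ∨ A = {1, 2} := by revert h; revert A; decide

lemma rb_mixed (A B C : Finset (Fin 3)) (hA : A.card = 2) (hB : B.card = 2) (hC : C.card = 2)
    (h : ¬(A = B ∧ B = C)) : RbP A B C := by revert hA hB hC h; revert A B C; decide

lemma nonrb_fullA (A B C : Finset (Fin 3)) (hB : B.Nonempty) (hC : C.Nonempty)
    (hA : A.card = 3) (hno : ¬ RbP A B C) : B = C ∧ B.card = 1 := by revert hB hC hA hno; revert A B C; decide

lemma nonrb_fullB (A B C : Finset (Fin 3)) (hA : A.Nonempty) (hC : C.Nonempty)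
    (hB : B.card = 3) (hno : ¬ RbP A B C) : A = C ∧ A.card = 1 := by revert hA hC hB hno; revert A B C; decide

lemma nonrb_fullC (A B C : Finset (Fin 3)) (hA : A.Nonempty) (hB : B.Nonempty)
    (hC : C.card = 3) (hno : ¬ RbP A B C) : A = B ∧ A.card = 1 := by revert hA hB hC hno; revert A B C; decide

lemma palette_card_cases (A : Finset (Fin 3)) (h : A.Nonempty) :
    A.card = 1 ∨ A.card = 2 ∨ A.card = 3 := by revert h; revert A; decide


section Defs
variable {n : ℕ} (t : Template 3 n)

def EC (k : ℕ) : Finset (Edge n) := univ.filter fun e => (t e).card = k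
def GP (P : Finset (Fin 3)) : Finset (Edge n) := univ.filter fun e => t e = P

def rbPred (p : Fin n × Fin n × Fin n) : Prop :=
  ∃ (hxy : p.1 < p.2.1) (hyz : p.2.1 < p.2.2),
    RbP (t ⟨(p.1, p.2.1), hxy⟩) (t ⟨(p.2.1, p.2.2), hyz⟩) (t ⟨(p.1, p.2.2), hxy.trans hyz⟩)

open Classical in
noncomputable def RBf : Finset (Fin n × Fin n × Fin n) := (triF n).filter (rbPred t)

lemma mem_RBf {p : Fin n × Fin n × Fin n} : p ∈ RBf t ↔ rbPred t p := by
  classical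
  simp only [RBf, mem_filter, triF, mem_univ, true_and, and_iff_right_iff_imp]
  rintro ⟨h1, h2, -⟩
  exact ⟨h1, h2⟩

-- partition of edges into palette-size classes
lemma EC_partition (hP : Proper t) :
    (EC t 1).card + (EC t 2).card + (EC t 3).card = n.choose 2 := by
  classical
  have h2 : (EC t 2).card + (EC t 3).card
      = ((univ : Finset (Edge n)).filter fun e => (t e).card = 2 ∨ (t e).card = 3).card := by
    rw [← card_union_of_disjoint]
    · congr 1
      ext e
      simp only [EC, mem_union, mem_filter, mem_univ, true_and]
    · simp only [EC, disjoint_left, mem_filter]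
      rintro e ⟨-, h⟩ ⟨-, h'⟩
      omega
  have h1 : (EC t 1).card
      + ((univ : Finset (Edge n)).filter fun e => (t e).card = 2 ∨ (t e).card = 3).card
      = (univ : Finset (Edge n)).card := by
    rw [← card_union_of_disjoint]
    · have : (EC t 1) ∪ ((univ : Finset (Edge n)).filter fun e => (t e).card = 2 ∨ (t e).card = 3)
          = univ := by
        ext e
        simp only [EC, mem_union, mem_filter, mem_univ, true_and, iff_true]
        have := palette_card_cases (t e) (hP e)
        tauto
      rw [this]
    · simp only [EC, disjoint_left, mem_filter]
      rintro e ⟨-, h⟩ ⟨-, h'⟩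
      omega
  rw [← card_edge_univ n, ← h1, ← h2, add_assoc]

lemma ent_eq (hP : Proper t) :
    Ent t = (EC t 2).card * Real.logb 3 2 + (EC t 3).card := by
  classical
  have hsplit : ∀ e : Edge n, Real.logb 3 ((t e).card) =
      (if (t e).card = 2 then Real.logb 3 2 else 0) + (if (t e).card = 3 then 1 else 0) := by
    intro e
    rcases palette_card_cases (t e) (hP e) with h | h | h <;> rw [h] <;> norm_num
  rw [Ent]
  rw [Finset.sum_congr rfl fun e (_ : e ∈ univ) => by push_cast; exact hsplit e,
    Finset.sum_add_distrib]
  congr 1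
  · rw [← Finset.sum_filter, Finset.sum_const, nsmul_eq_mul]
    congr 1
  · rw [← Finset.sum_filter, Finset.sum_const, nsmul_eq_mul, mul_one]
    congr 1

section PartD
variable {n : ℕ} (t : Template 3 n)

def striple (u v z : Fin n) : Fin n × Fin n × Fin n :=
  if z < u then (z, u, v) else if z < v then (u, z, v) else (u, v, z)

def posz (u v z : Fin n) : Fin 3 :=
  if z < u then 0 else if z < v then 1 else 2

lemma striple_cases {u v z : Fin n} (huv : u < v) (hzu : z ≠ u) (hzv : z ≠ v) :
    (z < u ∧ striple u v z = (z, u, v) ∧ posz u v z = 0) ∨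
    (u < z ∧ z < v ∧ striple u v z = (u, z, v) ∧ posz u v z = 1) ∨
    (v < z ∧ striple u v z = (u, v, z) ∧ posz u v z = 2) := by
  unfold striple posz
  rcases lt_or_gt_of_ne hzu with h | h
  · left; simp [h]
  · rcases lt_or_gt_of_ne hzv with h' | h'
    · right; left; simp [h, h', not_lt_of_gt h]
    · right; right
      refine ⟨h', ?_, ?_⟩ <;> simp [not_lt_of_gt h, not_lt_of_gt h']

lemma striple_inj {u v z u' v' z' : Fin n} (huv : u < v) (hzu : z ≠ u) (hzv : z ≠ v)
    (huv' : u' < v') (hzu' : z' ≠ u') (hzv' : z' ≠ v')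
    (h1 : striple u v z = striple u' v' z') (h2 : posz u v z = posz u' v' z') :
    u = u' ∧ v = v' ∧ z = z' := by
  rcases striple_cases huv hzu hzv with ⟨ho, hs, hp⟩ | ⟨ho1, ho2, hs, hp⟩ | ⟨ho, hs, hp⟩ <;>
  rcases striple_cases huv' hzu' hzv' with ⟨ho', hs', hp'⟩ | ⟨ho1', ho2', hs', hp'⟩ |
    ⟨ho', hs', hp'⟩ <;>
  rw [hs, hs'] at h1 <;> rw [hp, hp'] at h2 <;>
  first
    | (exact absurd h2 (by decide))
    | (simp only [Prod.mk.injEq] at h1; tauto)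

def sedge (d : Edge n) (a b : Fin n) : Edge n :=
  if h : a < b then ⟨(a, b), h⟩ else if h' : b < a then ⟨(b, a), h'⟩ else d

lemma sedge_of_lt (d : Edge n) {a b : Fin n} (h : a < b) :
    sedge d a b = ⟨(a, b), h⟩ := by simp [sedge, h]

lemma sedge_of_gt (d : Edge n) {a b : Fin n} (h : b < a) :
    sedge d a b = ⟨(b, a), h⟩ := by simp [sedge, h, not_lt_of_gt h]

lemma nonrb_extract (hP : Proper t) {u v z : Fin n} (huv : u < v) (hzu : z ≠ u) (hzv : z ≠ v)
    (hfull : (t ⟨(u, v), huv⟩).card = 3) (hno : striple u v z ∉ RBf t) (d : Edge n) :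
    t (sedge d u z) = t (sedge d v z) ∧ (t (sedge d u z)).card = 1 := by
  rcases striple_cases huv hzu hzv with ⟨ho, hs, -⟩ | ⟨ho1, ho2, hs, -⟩ | ⟨ho, hs, -⟩
  · -- z < u : triple (z,u,v)
    rw [hs] at hno
    have hno' : ¬ RbP (t ⟨(z, u), ho⟩) (t ⟨(u, v), huv⟩) (t ⟨(z, v), ho.trans huv⟩) :=
      fun hR => hno (mem_RBf t |>.2 ⟨ho, huv, hR⟩)
    obtain ⟨hac, hc1⟩ := nonrb_fullB _ _ _ (hP _) (hP _) hfull hno'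
    rw [sedge_of_gt d ho, sedge_of_gt d (ho.trans huv)]
    exact ⟨hac, hc1⟩
  · -- u < z < v : triple (u,z,v)
    rw [hs] at hno
    have hno' : ¬ RbP (t ⟨(u, z), ho1⟩) (t ⟨(z, v), ho2⟩) (t ⟨(u, v), huv⟩) :=
      fun hR => hno (mem_RBf t |>.2 ⟨ho1, ho2, hR⟩)
    obtain ⟨hab, ha1⟩ := nonrb_fullC _ _ _ (hP _) (hP _) hfull hno'
    rw [sedge_of_lt d ho1, sedge_of_gt d ho2]
    exact ⟨hab, ha1⟩
  · -- v < z : triple (u,v,z)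
    rw [hs] at hno
    have hno' : ¬ RbP (t ⟨(u, v), huv⟩) (t ⟨(v, z), ho⟩) (t ⟨(u, z), huv.trans ho⟩) :=
      fun hR => hno (mem_RBf t |>.2 ⟨huv, ho, hR⟩)
    obtain ⟨hbc, hb1⟩ := nonrb_fullA _ _ _ (hP _) (hP _) hfull hno'
    rw [sedge_of_lt d (huv.trans ho), sedge_of_lt d ho]
    exact ⟨hbc.symm, by rw [← hbc]; exact hb1⟩

lemma count_full (hP : Proper t) :
    (EC t 3).card * (n - 2) ≤ 3 * (RBf t).card + (EC t 1).card * n := by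
  classical
  set D := ((EC t 3) ×ˢ (univ : Finset (Fin n))).filter
    (fun q => q.2 ≠ q.1.1.1 ∧ q.2 ≠ q.1.1.2) with hD
  have hmemD : ∀ q : Edge n × Fin n, q ∈ D ↔
      q.1 ∈ EC t 3 ∧ q.2 ≠ q.1.1.1 ∧ q.2 ≠ q.1.1.2 := by
    intro q
    simp only [hD, mem_filter, mem_product, mem_univ, and_true, true_and, and_assoc]
  -- card D = e3 * (n-2)
  have hDcard : D.card = (EC t 3).card * (n - 2) := by
    rw [Finset.card_eq_sum_card_fiberwise (f := Prod.fst) (t := EC t 3)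
      (fun q hq => ((hmemD q).1 hq).1)]
    rw [Finset.sum_congr rfl (fun e he => ?_), Finset.sum_const, smul_eq_mul]
    have himg : D.filter (fun q => q.1 = e)
        = (univ.filter fun z : Fin n => z ≠ e.1.1 ∧ z ≠ e.1.2).image (fun z => (e, z)) := by
      ext q
      simp only [mem_filter, mem_image, mem_univ, true_and]
      constructor
      · rintro ⟨hq, rfl⟩
        exact ⟨q.2, ((hmemD q).1 hq).2, rfl⟩
      · rintro ⟨w, ⟨hw1, hw2⟩, rfl⟩
        exact ⟨(hmemD _).2 ⟨he, hw1, hw2⟩, rfl⟩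
    rw [himg, Finset.card_image_of_injective _ (fun a b h => congrArg Prod.snd h)]
    have hset : (univ.filter fun z : Fin n => z ≠ e.1.1 ∧ z ≠ e.1.2)
        = univ \ {e.1.1, e.1.2} := by
      ext z
      simp
    rw [hset, card_sdiff_of_subset (subset_univ _), card_univ, Fintype.card_fin, card_pair e.2.ne]
  -- split
  set P : Edge n × Fin n → Prop := fun q => striple q.1.1.1 q.1.1.2 q.2 ∈ RBf t with hPdef
  have hsplit := Finset.card_filter_add_card_filter_not (s := D) (p := P)
  -- rainbow part
  have hD1 : (D.filter P).card ≤ (RBf t).card * 3 := by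
    have hle := Finset.card_le_card_of_injOn (s := D.filter P)
      (t := (RBf t) ×ˢ (univ : Finset (Fin 3)))
      (fun (q : Edge n × Fin n) => (striple q.1.1.1 q.1.1.2 q.2, posz q.1.1.1 q.1.1.2 q.2))
      (fun q hq => by
        rw [mem_coe, mem_filter] at hq
        exact mem_product.2 ⟨hq.2, mem_univ _⟩)
      (fun q hq q' hq' heq => by
        simp only [coe_filter, Set.mem_setOf_eq] at hq hq'
        obtain ⟨hqD, -⟩ := hq
        obtain ⟨hqD', -⟩ := hq'
        obtain ⟨he3, hz1, hz2⟩ := (hmemD q).1 hqD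
        obtain ⟨he3', hz1', hz2'⟩ := (hmemD q').1 hqD'
        simp only [Prod.mk.injEq] at heq
        obtain ⟨h1, h2, h3⟩ := striple_inj q.1.2 hz1 hz2 q'.1.2 hz1' hz2' heq.1 heq.2
        have : q.1 = q'.1 := Subtype.ext (Prod.ext h1 h2)
        exact Prod.ext this h3)
    simpa only [card_product, card_univ, Fintype.card_fin] using hle
  -- non-rainbow part
  have hD2 : (D.filter fun a => ¬ P a).card ≤ (EC t 1).card * n := by
    have hle := Finset.card_le_card_of_injOn (s := D.filter (fun a => ¬ P a))
      (t := (EC t 1) ×ˢ (univ : Finset (Fin n)))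
      (fun (q : Edge n × Fin n) => (sedge q.1 q.1.1.1 q.2, q.1.1.2))
      (fun q hq => by
        rw [mem_coe, mem_filter] at hq
        obtain ⟨hqD, hno⟩ := hq
        obtain ⟨he3, hz1, hz2⟩ := (hmemD q).1 hqD
        simp only [EC, mem_filter, mem_univ, true_and] at he3
        obtain ⟨-, hcard1⟩ := nonrb_extract t hP q.1.2 hz1 hz2 he3 hno q.1
        exact mem_product.2 ⟨by simp only [EC, mem_filter, mem_univ, true_and]; exact hcard1,
          mem_univ _⟩)
      (fun q hq q' hq' heq => by
        simp only [coe_filter, Set.mem_setOf_eq] at hq hq'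
        obtain ⟨hqD, hno⟩ := hq
        obtain ⟨hqD', hno'⟩ := hq'
        obtain ⟨he3, hz1, hz2⟩ := (hmemD q).1 hqD
        obtain ⟨he3', hz1', hz2'⟩ := (hmemD q').1 hqD'
        simp only [EC, mem_filter, mem_univ, true_and] at he3 he3'
        simp only [Prod.mk.injEq] at heq
        obtain ⟨hE, hw⟩ := heq
        -- w := q.1.1.2 = q'.1.1.2
        rcases lt_or_gt_of_ne hz1 with hlt | hgt <;>
        rcases lt_or_gt_of_ne hz1' with hlt' | hgt'
        · -- z < u, z' < u'
          rw [sedge_of_gt _ hlt, sedge_of_gt _ hlt'] at hE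
          have h := Subtype.ext_iff.1 hE
          simp only [Prod.mk.injEq] at h
          have hq1 : q.1 = q'.1 := Subtype.ext (Prod.ext h.2 hw)
          exact Prod.ext hq1 h.1
        · -- z < u, u' < z' : mismatch, contradiction
          rw [sedge_of_gt _ hlt, sedge_of_lt _ hgt'] at hE
          have h := Subtype.ext_iff.1 hE
          simp only [Prod.mk.injEq] at h
          -- z = u', u = z'
          obtain ⟨heq2, hcard1⟩ := nonrb_extract t hP q.1.2 hz1 hz2 he3 hno q.1
          -- t(sedge v z) has card 1 where v = q.1.1.2
          rw [heq2] at hcard1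
          rw [sedge_of_gt _ (hlt.trans q.1.2)] at hcard1
          -- hcard1 : (t ⟨(z, q.1.1.2)⟩).card = 1 ; but ⟨(z,q.1.1.2)⟩ = q'.1 with card 3
          have hq1 : q'.1 = ⟨(q.2, q.1.1.2), hlt.trans q.1.2⟩ :=
            Subtype.ext (Prod.ext h.1.symm hw.symm)
          rw [hq1] at he3'
          omega
        · -- u < z, z' < u' : symmetric contradiction
          rw [sedge_of_lt _ hgt, sedge_of_gt _ hlt'] at hE
          have h := Subtype.ext_iff.1 hE
          simp only [Prod.mk.injEq] at h
          -- u = z', z = u'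
          obtain ⟨heq2, hcard1⟩ := nonrb_extract t hP q'.1.2 hz1' hz2' he3' hno' q'.1
          rw [heq2] at hcard1
          rw [sedge_of_gt _ (hlt'.trans q'.1.2)] at hcard1
          have : q.1 = ⟨(q'.2, q'.1.1.2), hlt'.trans q'.1.2⟩ := by
            apply Subtype.ext
            exact Prod.ext h.1 hw
          rw [this] at he3
          omega
        · -- u < z, u' < z'
          rw [sedge_of_lt _ hgt, sedge_of_lt _ hgt'] at hE
          have h := Subtype.ext_iff.1 hE
          simp only [Prod.mk.injEq] at h
          have hq1 : q.1 = q'.1 := Subtype.ext (Prod.ext h.1 hw)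
          exact Prod.ext hq1 h.2)
    simpa only [card_product, card_univ, Fintype.card_fin] using hle
  omega

end PartD

section PartE
variable {n : ℕ} (t : Template 3 n)

def badPred (p : Fin n × Fin n × Fin n) : Prop :=
  ∃ (h1 : p.1 < p.2.1) (h2 : p.2.1 < p.2.2),
    (t ⟨(p.1, p.2.1), h1⟩).card ≠ 2 ∨ (t ⟨(p.2.1, p.2.2), h2⟩).card ≠ 2 ∨
    (t ⟨(p.1, p.2.2), h1.trans h2⟩).card ≠ 2

def monoPred (P : Finset (Fin 3)) (p : Fin n × Fin n × Fin n) : Prop :=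
  ∃ (h1 : p.1 < p.2.1) (h2 : p.2.1 < p.2.2),
    t ⟨(p.1, p.2.1), h1⟩ = P ∧ t ⟨(p.2.1, p.2.2), h2⟩ = P ∧ t ⟨(p.1, p.2.2), h1.trans h2⟩ = P

open Classical in
noncomputable def badT : Finset (Fin n × Fin n × Fin n) := (triF n).filter (badPred t)

open Classical in
noncomputable def monoT (P : Finset (Fin 3)) : Finset (Fin n × Fin n × Fin n) :=
  (triF n).filter (monoPred t P)

noncomputable def badMap (p : Fin n × Fin n × Fin n) : Option (Edge n × Fin n) :=
  if h : p.1 < p.2.1 ∧ p.2.1 < p.2.2 then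
    some (if (t ⟨(p.1, p.2.1), h.1⟩).card ≠ 2 then (⟨(p.1, p.2.1), h.1⟩, p.2.2)
      else if (t ⟨(p.2.1, p.2.2), h.2⟩).card ≠ 2 then (⟨(p.2.1, p.2.2), h.2⟩, p.1)
      else (⟨(p.1, p.2.2), h.1.trans h.2⟩, p.2.1))
  else none

lemma badMap_cases {p : Fin n × Fin n × Fin n} (h1 : p.1 < p.2.1) (h2 : p.2.1 < p.2.2) :
    (badMap t p = some (⟨(p.1, p.2.1), h1⟩, p.2.2) ∧ (t ⟨(p.1, p.2.1), h1⟩).card ≠ 2) ∨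
    (badMap t p = some (⟨(p.2.1, p.2.2), h2⟩, p.1) ∧ (t ⟨(p.1, p.2.1), h1⟩).card = 2 ∧
      (t ⟨(p.2.1, p.2.2), h2⟩).card ≠ 2) ∨
    (badMap t p = some (⟨(p.1, p.2.2), h1.trans h2⟩, p.2.1) ∧ (t ⟨(p.1, p.2.1), h1⟩).card = 2 ∧
      (t ⟨(p.2.1, p.2.2), h2⟩).card = 2) := by
  unfold badMap
  rw [dif_pos ⟨h1, h2⟩]
  split_ifs with ha hb
  · exact Or.inl ⟨rfl, ha⟩
  · exact Or.inr (Or.inl ⟨rfl, not_not.1 ha, hb⟩)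
  · exact Or.inr (Or.inr ⟨rfl, not_not.1 ha, not_not.1 hb⟩)

lemma count_bad (hP : Proper t) :
    (badT t).card ≤ ((EC t 1).card + (EC t 3).card) * n := by
  classical
  have hle := Finset.card_le_card_of_injOn (s := badT t)
    (t := ((EC t 1 ∪ EC t 3) ×ˢ (univ : Finset (Fin n))).image some)
    (badMap t)
    (fun p hp => by
      simp only [mem_coe, badT, mem_filter] at hp
      obtain ⟨hptri, hbad⟩ := hp
      simp only [triF, mem_filter, mem_univ, true_and] at hptri
      obtain ⟨h1, h2⟩ := hptri
      obtain ⟨h1', h2', hd⟩ := hbad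
      have hmem : ∀ e : Edge n, (t e).card ≠ 2 → e ∈ EC t 1 ∪ EC t 3 := by
        intro e he
        rcases palette_card_cases _ (hP e) with h | h | h
        · exact mem_union_left _ (by simp only [EC, mem_filter, mem_univ, true_and]; exact h)
        · exact absurd h he
        · exact mem_union_right _ (by simp only [EC, mem_filter, mem_univ, true_and]; exact h)
      rcases badMap_cases t h1 h2 with ⟨hm, hc⟩ | ⟨hm, hc0, hc⟩ | ⟨hm, hc0, hc1⟩ <;> rw [hm]
      · exact mem_image_of_mem some (mem_product.2 ⟨hmem _ hc, mem_univ _⟩)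
      · exact mem_image_of_mem some (mem_product.2 ⟨hmem _ hc, mem_univ _⟩)
      · have hc2 : (t ⟨(p.1, p.2.2), h1.trans h2⟩).card ≠ 2 := by
          rcases hd with h | h | h
          · exact absurd hc0 h
          · exact absurd hc1 h
          · exact h
        exact mem_image_of_mem some (mem_product.2 ⟨hmem _ hc2, mem_univ _⟩))
    (fun p hp p' hp' heq => by
      simp only [coe_filter, Set.mem_setOf_eq, badT, mem_coe, mem_filter, triF,
        mem_univ, true_and] at hp hp'
      obtain ⟨⟨h1, h2⟩, -⟩ := hp
      obtain ⟨⟨h1', h2'⟩, -⟩ := hp'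
      rcases badMap_cases t h1 h2 with ⟨hm, -⟩ | ⟨hm, -, -⟩ | ⟨hm, -, -⟩ <;>
      rcases badMap_cases t h1' h2' with ⟨hm', -⟩ | ⟨hm', -, -⟩ | ⟨hm', -, -⟩ <;>
      rw [hm, hm'] at heq <;>
      simp only [Option.some.injEq, Prod.mk.injEq, Subtype.mk.injEq] at heq <;>
      obtain ⟨⟨e1, e2⟩, e3⟩ := heq <;>
      simp only [Fin.ext_iff, Fin.lt_def] at e1 e2 e3 h1 h2 h1' h2' <;>
      refine Prod.ext (by apply Fin.ext; omega)
        (Prod.ext (by apply Fin.ext; omega) (by apply Fin.ext; omega)))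
  calc (badT t).card ≤ _ := hle
    _ ≤ ((EC t 1).card + (EC t 3).card) * n := by
      rw [Finset.card_image_of_injective _ (Option.some_injective _), card_product,
        card_univ, Fintype.card_fin]
      exact Nat.mul_le_mul_right n (card_union_le _ _)

end PartE

section PartF
variable {n : ℕ} (t : Template 3 n)

lemma tri_decomp (hP : Proper t) :
    n.choose 3 ≤ (badT t).card + (RBf t).card + (monoT t {0, 1}).card
      + (monoT t {0, 2}).card + (monoT t {1, 2}).card := by
  classical
  rw [← card_triF n]
  have hsub : triF n ⊆ badT t ∪ (RBf t ∪ (monoT t {0, 1} ∪ (monoT t {0, 2} ∪ monoT t {1, 2}))) := by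
    intro p hp
    have hp' := hp
    simp only [triF, mem_filter, mem_univ, true_and] at hp'
    obtain ⟨h1, h2⟩ := hp'
    set A := t ⟨(p.1, p.2.1), h1⟩ with hA
    set B := t ⟨(p.2.1, p.2.2), h2⟩ with hB
    set C := t ⟨(p.1, p.2.2), h1.trans h2⟩ with hC
    by_cases hb : A.card ≠ 2 ∨ B.card ≠ 2 ∨ C.card ≠ 2
    · exact mem_union_left _ (by
        simp only [badT, mem_filter]
        exact ⟨hp, h1, h2, hb⟩)
    · push_neg at hb
      obtain ⟨hA2, hB2, hC2⟩ := hb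
      by_cases hall : A = B ∧ B = C
      · refine mem_union_right _ (mem_union_right _ ?_)
        rcases card2_cases A hA2 with hav | hav | hav
        · refine mem_union_left _ ?_
          simp only [monoT, mem_filter]
          exact ⟨hp, h1, h2, hav, hall.1.symm.trans hav, (hall.1.trans hall.2).symm.trans hav⟩
        · refine mem_union_right _ (mem_union_left _ ?_)
          simp only [monoT, mem_filter]
          exact ⟨hp, h1, h2, hav, hall.1.symm.trans hav, (hall.1.trans hall.2).symm.trans hav⟩
        · refine mem_union_right _ (mem_union_right _ ?_)
          simp only [monoT, mem_filter]
          exact ⟨hp, h1, h2, hav, hall.1.symm.trans hav, (hall.1.trans hall.2).symm.trans hav⟩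
      · refine mem_union_right _ (mem_union_left _ ?_)
        rw [mem_RBf]
        exact ⟨h1, h2, rb_mixed A B C hA2 hB2 hC2 hall⟩
  refine le_trans (card_le_card hsub) ?_
  refine le_trans (card_union_le _ _) ?_
  have l2 := card_union_le (RBf t) (monoT t {0, 1} ∪ (monoT t {0, 2} ∪ monoT t {1, 2}))
  have l3 := card_union_le (monoT t {0, 1}) (monoT t {0, 2} ∪ monoT t {1, 2})
  have l4 := card_union_le (monoT t {0, 2}) (monoT t {1, 2})
  omega

end PartF

section PartG
variable {n : ℕ} (t : Template 3 n)

lemma erase3_1 {α : Type*} [DecidableEq α] {x y z : α} (h1 : x ≠ y) (h2 : x ≠ z) :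
    ({x, y, z} : Finset α).erase x = {y, z} := by
  ext w
  simp only [Finset.mem_erase, Finset.mem_insert, Finset.mem_singleton]
  constructor
  · rintro ⟨hw, rfl | rfl | rfl⟩
    · exact absurd rfl hw
    · exact Or.inl rfl
    · exact Or.inr rfl
  · rintro (rfl | rfl)
    · exact ⟨h1.symm, Or.inr (Or.inl rfl)⟩
    · exact ⟨h2.symm, Or.inr (Or.inr rfl)⟩

lemma erase3_2 {α : Type*} [DecidableEq α] {x y z : α} (h1 : y ≠ x) (h2 : y ≠ z) :
    ({x, y, z} : Finset α).erase y = {x, z} := by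
  ext w
  simp only [Finset.mem_erase, Finset.mem_insert, Finset.mem_singleton]
  constructor
  · rintro ⟨hw, rfl | rfl | rfl⟩
    · exact Or.inl rfl
    · exact absurd rfl hw
    · exact Or.inr rfl
  · rintro (rfl | rfl)
    · exact ⟨h1.symm, Or.inl rfl⟩
    · exact ⟨h2.symm, Or.inr (Or.inr rfl)⟩

lemma erase3_3 {α : Type*} [DecidableEq α] {x y z : α} (h1 : z ≠ x) (h2 : z ≠ y) :
    ({x, y, z} : Finset α).erase z = {x, y} := by
  ext w
  simp only [Finset.mem_erase, Finset.mem_insert, Finset.mem_singleton]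
  constructor
  · rintro ⟨hw, rfl | rfl | rfl⟩
    · exact Or.inl rfl
    · exact Or.inr rfl
    · exact absurd rfl hw
  · rintro (rfl | rfl)
    · exact ⟨h1.symm, Or.inl rfl⟩
    · exact ⟨h2.symm, Or.inr (Or.inl rfl)⟩

lemma kk_step (P : Finset (Fin 3)) {k : ℕ} (h3k : 3 ≤ k) (hkn : k ≤ n)
    (ht : k.choose 3 ≤ (monoT t P).card) : k.choose 2 ≤ (GP t P).card := by
  set 𝒜 : Finset (Finset (Fin n)) :=
    (monoT t P).image (fun p => ({p.1, p.2.1, p.2.2} : Finset (Fin n))) with h𝒜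
  have hsorted : ∀ p ∈ monoT t P, p.1 < p.2.1 ∧ p.2.1 < p.2.2 := by
    intro p hp
    simp only [monoT, mem_filter, triF, mem_univ, true_and] at hp
    exact hp.1
  have hcard𝒜 : 𝒜.card = (monoT t P).card := by
    rw [h𝒜]
    apply Finset.card_image_of_injOn
    intro p hp p' hp' heq
    rw [mem_coe] at hp hp'
    obtain ⟨h1, h2⟩ := hsorted p hp
    obtain ⟨h1', h2'⟩ := hsorted p' hp'
    obtain ⟨e1, e2, e3⟩ := triple_ext h1 h2 h1' h2' heq
    exact Prod.ext e1 (Prod.ext e2 e3)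
  have hsized : (𝒜 : Set (Finset (Fin n))).Sized 3 := by
    intro A hA
    rw [h𝒜, coe_image] at hA
    obtain ⟨p, hp, rfl⟩ := hA
    obtain ⟨h1, h2⟩ := hsorted p (mem_coe.1 hp)
    rw [card_insert_of_notMem (by
      simp only [mem_insert, mem_singleton]
      push_neg
      exact ⟨h1.ne, (h1.trans h2).ne⟩), card_pair h2.ne]
  have hkk := Finset.kruskal_katona_lovasz_form (i := 1) (r := 3) (k := k) (n := n)
    (by norm_num) h3k hkn hsized (le_trans ht (le_of_eq hcard𝒜.symm))
  rw [Function.iterate_one] at hkk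
  have hfin : ((GP t P).image (fun e => ({e.1.1, e.1.2} : Finset (Fin n)))).card
      ≤ (GP t P).card := card_image_le
  refine le_trans hkk (le_trans (card_le_card ?_) hfin)
  intro s hs
  rw [Finset.mem_shadow_iff] at hs
  obtain ⟨A, hA, a, ha, rfl⟩ := hs
  rw [h𝒜, mem_image] at hA
  obtain ⟨p, hp, rfl⟩ := hA
  obtain ⟨h1, h2⟩ := hsorted p hp
  have hmono := hp
  simp only [monoT, mem_filter, triF, mem_univ, true_and] at hmono
  obtain ⟨-, hh1, hh2, hP1, hP2, hP3⟩ := hmono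
  simp only [mem_insert, mem_singleton] at ha
  rcases ha with rfl | rfl | rfl
  · rw [erase3_1 h1.ne (h1.trans h2).ne]
    exact mem_image.2 ⟨⟨(p.2.1, p.2.2), h2⟩,
      by simp only [GP, mem_filter, mem_univ, true_and]; exact hP2, rfl⟩
  · rw [erase3_2 h1.ne.symm h2.ne]
    exact mem_image.2 ⟨⟨(p.1, p.2.2), h1.trans h2⟩,
      by simp only [GP, mem_filter, mem_univ, true_and]; exact hP3, rfl⟩
  · rw [erase3_3 (h1.trans h2).ne.symm h2.ne.symm]
    exact mem_image.2 ⟨⟨(p.1, p.2.1), h1⟩,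
      by simp only [GP, mem_filter, mem_univ, true_and]; exact hP1, rfl⟩

lemma monoT_subset_tri (P : Finset (Fin 3)) : monoT t P ⊆ triF n := by
  intro p hp
  simp only [monoT, mem_filter] at hp
  exact hp.1

lemma mono_real_bound (P : Finset (Fin 3)) (hn : 1 ≤ n) :
    6 * ((monoT t P).card : ℝ) ≤ (Real.sqrt (2 * (GP t P).card) + 2) ^ 3 := by
  have hsqrt0 : (0 : ℝ) ≤ Real.sqrt (2 * (GP t P).card) := Real.sqrt_nonneg _
  have hwit : (GP t P).card < (n + 1).choose 2 := by
    refine lt_of_le_of_lt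
      (le_trans (card_le_card (filter_subset _ _)) (le_of_eq (card_edge_univ n))) ?_
    have h21 : (n + 1).choose 2 = n.choose 1 + n.choose 2 := Nat.choose_succ_succ' n 1
    have h1n : 1 ≤ n.choose 1 := by rwa [Nat.choose_one_right]
    omega
  have hex : ∃ k : ℕ, (GP t P).card < k.choose 2 := ⟨n + 1, hwit⟩
  obtain ⟨k, hk, hkmin, hkle⟩ : ∃ k : ℕ, (GP t P).card < k.choose 2 ∧
      (∀ j < k, ¬((GP t P).card < j.choose 2)) ∧ k ≤ n + 1 :=
    ⟨Nat.find hex, Nat.find_spec hex, fun j hj => Nat.find_min hex hj, Nat.find_le hwit⟩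
  rcases le_or_gt k 3 with hk3 | hk4
  · -- m < 3, so no mono triangles at all
    have hm3 : (GP t P).card < 3 := lt_of_lt_of_le hk (Nat.choose_le_choose 2 hk3)
    have htP : (monoT t P).card = 0 := by
      rw [Finset.card_eq_zero]
      by_contra hne
      obtain ⟨p, hp⟩ := Finset.nonempty_iff_ne_empty.2 hne
      have hmono := hp
      simp only [monoT, mem_filter, triF, mem_univ, true_and] at hmono
      obtain ⟨⟨h1, h2⟩, hh1, hh2, hP1, hP2, hP3⟩ := hmono
      have hsub : ({⟨(p.1, p.2.1), h1⟩, ⟨(p.2.1, p.2.2), h2⟩,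
          ⟨(p.1, p.2.2), h1.trans h2⟩} : Finset (Edge n)) ⊆ GP t P := by
        intro e he
        simp only [mem_insert, mem_singleton] at he
        rcases he with rfl | rfl | rfl <;>
          simp only [GP, mem_filter, mem_univ, true_and] <;> assumption
      have hne12 : (⟨(p.1, p.2.1), h1⟩ : Edge n) ≠ ⟨(p.2.1, p.2.2), h2⟩ := by
        simp only [ne_eq, Subtype.mk.injEq, Prod.mk.injEq, not_and]
        intro h; exact absurd h h1.ne
      have hne13 : (⟨(p.1, p.2.1), h1⟩ : Edge n) ≠ ⟨(p.1, p.2.2), h1.trans h2⟩ := by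
        simp only [ne_eq, Subtype.mk.injEq, Prod.mk.injEq]
        rintro ⟨-, h⟩; exact absurd h h2.ne
      have hne23 : (⟨(p.2.1, p.2.2), h2⟩ : Edge n) ≠ ⟨(p.1, p.2.2), h1.trans h2⟩ := by
        simp only [ne_eq, Subtype.mk.injEq, Prod.mk.injEq]
        rintro ⟨h, -⟩; exact absurd h h1.ne.symm
      have hc3 : ({⟨(p.1, p.2.1), h1⟩, ⟨(p.2.1, p.2.2), h2⟩,
          ⟨(p.1, p.2.2), h1.trans h2⟩} : Finset (Edge n)).card = 3 := by
        rw [card_insert_of_notMem (by simp [hne12, hne13]), card_pair hne23]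
      have := card_le_card hsub
      omega
    rw [htP]
    norm_num
    positivity
  · -- 4 ≤ k
    have hk1 : (k - 1).choose 2 ≤ (GP t P).card :=
      Nat.le_of_not_lt (hkmin (k - 1) (by omega))
    have htk : (monoT t P).card ≤ k.choose 3 := by
      rcases le_or_gt k n with hkn | hkn
      · by_contra hc
        push_neg at hc
        exact absurd (kk_step t P (by omega) hkn hc.le) (by omega)
      · calc (monoT t P).card ≤ (triF n).card := card_le_card (monoT_subset_tri t P)
          _ = n.choose 3 := card_triF n
          _ ≤ k.choose 3 := Nat.choose_le_choose 3 (by omega)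
    have hid1 : (k - 1).choose 2 * 2 = (k - 1) * (k - 2) := by
      have h := Nat.choose_succ_right_eq (k - 1) 1
      rw [Nat.choose_one_right] at h
      norm_num at h
      have h2 : k - 1 - 1 = k - 2 := by omega
      rw [h2] at h
      exact h
    have h2m : (k - 2) * (k - 2) ≤ 2 * (GP t P).card := by
      have : (k - 2) * (k - 2) ≤ (k - 1) * (k - 2) := Nat.mul_le_mul_right _ (by omega)
      omega
    have hksqrt : (k : ℝ) ≤ Real.sqrt (2 * (GP t P).card) + 2 := by
      have hk2 : (2 : ℝ) ≤ (k : ℝ) := by exact_mod_cast (by omega : 2 ≤ k)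
      have hcast : ((k : ℝ) - 2) ^ 2 ≤ 2 * ((GP t P).card : ℝ) := by
        have h := (Nat.cast_le (α := ℝ)).2 h2m
        push_cast [Nat.cast_sub (by omega : 2 ≤ k)] at h
        nlinarith [h]
      have hle := (Real.le_sqrt (by linarith : (0:ℝ) ≤ (k:ℝ) - 2) (by positivity)).2 hcast
      linarith
    have hid6 : k.choose 3 * 6 = k * (k - 1) * (k - 2) := by
      have ha := Nat.choose_succ_right_eq k 2
      have hb := Nat.choose_succ_right_eq k 1
      rw [Nat.choose_one_right] at hb
      norm_num at ha hb
      calc k.choose 3 * 6 = k.choose 3 * 3 * 2 := by ring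
        _ = k.choose 2 * (k - 2) * 2 := by rw [ha]
        _ = k.choose 2 * 2 * (k - 2) := by ring
        _ = k * (k - 1) * (k - 2) := by rw [hb]
    calc 6 * ((monoT t P).card : ℝ) ≤ 6 * (k.choose 3 : ℝ) := by
          have := (Nat.cast_le (α := ℝ)).2 htk
          linarith
      _ = (k.choose 3 * 6 : ℕ) := by push_cast; ring
      _ = (k * (k - 1) * (k - 2) : ℕ) := by rw [hid6]
      _ ≤ ((k * k * k : ℕ) : ℝ) := by
          exact_mod_cast Nat.mul_le_mul (Nat.mul_le_mul_left k (by omega)) (by omega)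
      _ = (k : ℝ) ^ 3 := by push_cast; ring
      _ ≤ (Real.sqrt (2 * (GP t P).card) + 2) ^ 3 := by
          apply pow_le_pow_left₀ (by positivity) hksqrt

lemma GP_sum_le :
    (GP t {0, 1}).card + (GP t {0, 2}).card + (GP t {1, 2}).card ≤ n.choose 2 := by
  classical
  have hd1 : Disjoint (GP t {0, 1}) (GP t {0, 2}) := by
    simp only [GP, disjoint_left, mem_filter]
    rintro e ⟨-, h1⟩ ⟨-, h2⟩
    rw [h1] at h2
    exact absurd h2 (by decide)
  have hd2 : Disjoint (GP t {0, 1} ∪ GP t {0, 2}) (GP t {1, 2}) := by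
    simp only [GP, disjoint_left, mem_union, mem_filter]
    rintro e (⟨-, h1⟩ | ⟨-, h1⟩) ⟨-, h2⟩ <;> rw [h1] at h2 <;> exact absurd h2 (by decide)
  calc (GP t {0, 1}).card + (GP t {0, 2}).card + (GP t {1, 2}).card
      = ((GP t {0, 1} ∪ GP t {0, 2}) ∪ GP t {1, 2}).card := by
        rw [card_union_of_disjoint hd2, card_union_of_disjoint hd1]
    _ ≤ (univ : Finset (Edge n)).card := card_le_card (subset_univ _)
    _ = n.choose 2 := card_edge_univ n

end PartG

section Endgame

lemma logb_lb : (5/8 : ℝ) ≤ Real.logb 3 2 := by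
  have h3 : (0:ℝ) < Real.log 3 := Real.log_pos (by norm_num)
  rw [Real.logb, le_div_iff₀ h3]
  have h := Real.log_le_log (by norm_num : (0:ℝ) < 243) (by norm_num : (243:ℝ) ≤ 256)
  have h1 : (243:ℝ) = 3^(5:ℕ) := by norm_num
  have h2 : (256:ℝ) = 2^(8:ℕ) := by norm_num
  rw [h1, h2, Real.log_pow, Real.log_pow] at h
  push_cast at h
  linarith

lemma logb_ub : Real.logb 3 2 ≤ 2/3 := by
  have h3 : (0:ℝ) < Real.log 3 := Real.log_pos (by norm_num)
  rw [Real.logb, div_le_iff₀ h3]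
  have h := Real.log_le_log (by norm_num : (0:ℝ) < 8) (by norm_num : (8:ℝ) ≤ 9)
  have h1 : (8:ℝ) = 2^(3:ℕ) := by norm_num
  have h2 : (9:ℝ) = 3^(2:ℕ) := by norm_num
  rw [h1, h2, Real.log_pow, Real.log_pow] at h
  push_cast at h
  linarith

lemma endgame {ε' L δ nn N T rT e1 e2 e3 m1 m2 m3 t1 t2 t3 a1 a2 a3 s : ℝ}
    (hε'pos : 0 < ε') (hε'le1 : ε' ≤ 1) (hδ : δ = ε' / 1000)
    (hL1 : 5/8 ≤ L) (hL2 : L ≤ 2/3)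
    (hnn : 10000 ≤ nn * ε') (hnn0 : 10000 ≤ nn)
    (hN2 : N * 2 = nn * (nn - 1)) (hT3 : T * 3 = N * (nn - 2))
    (he1 : 0 ≤ e1) (he2 : 0 ≤ e2) (he3 : 0 ≤ e3)
    (hpart : e1 + e2 + e3 = N)
    (hEnt : (L - δ) * N ≤ e2 * L + e3)
    (hrT0 : 0 ≤ rT) (hrb : rT ≤ δ * T)
    (hcf : e3 * (nn - 2) ≤ 3 * rT + e1 * nn)
    (hdec : T ≤ (e1 + e3) * nn + rT + (t1 + t2 + t3))
    (hm1 : 0 ≤ m1) (hm2 : 0 ≤ m2) (hm3 : 0 ≤ m3)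
    (hmsum : m1 + m2 + m3 ≤ N)
    (ha1 : 0 ≤ a1) (ha2 : 0 ≤ a2) (ha3 : 0 ≤ a3)
    (ha1s : a1 ≤ s * nn) (ha2s : a2 ≤ s * nn) (ha3s : a3 ≤ s * nn)
    (ha1n : a1 ≤ nn) (ha2n : a2 ≤ nn) (ha3n : a3 ≤ nn)
    (hsq1 : a1 ^ 2 = 2 * m1) (hsq2 : a2 ^ 2 = 2 * m2) (hsq3 : a3 ^ 2 = 2 * m3)
    (hs0 : 0 ≤ s) (hs1 : s ≤ 1 - ε' / 2)
    (hc1 : 6 * t1 ≤ (a1 + 2) ^ 3) (hc2 : 6 * t2 ≤ (a2 + 2) ^ 3)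
    (hc3 : 6 * t3 ≤ (a3 + 2) ^ 3) : False := by
  have hδ0 : 0 ≤ δ := by rw [hδ]; positivity
  have hnnpos : (0:ℝ) < nn := by linarith
  have hN0 : 0 < N := by nlinarith only [hN2, hnn0]
  have hDN0 : 0 ≤ δ * N := mul_nonneg hδ0 hN0.le
  -- Step 1: entropy gives L e1 - (1-L) e3 ≤ δ N
  have hS0 : L * e1 - (1 - L) * e3 ≤ δ * N := by nlinarith only [hEnt, hpart, hL1, hL2, hδ0, hN0]
  have hδT3 : δ * (T * 3) = δ * (N * (nn - 2)) := by rw [hT3]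
  -- Step 2: e3 (nn-2) ≤ δ N (nn - 2) + e1 nn
  have hS1 : e3 * (nn - 2) ≤ δ * N * (nn - 2) + e1 * nn := by
    nlinarith only [hcf, hrb, hδT3, hδ0]
  -- Step 3: e1 ≤ 7 δ N
  have hA : (L * e1 - (1 - L) * e3) * (nn - 2) ≤ δ * N * (nn - 2) :=
    mul_le_mul_of_nonneg_right hS0 (by linarith)
  have hB : (1 - L) * (e3 * (nn - 2)) ≤ (1 - L) * (δ * N * (nn - 2) + e1 * nn) :=
    mul_le_mul_of_nonneg_left hS1 (by linarith)
  have hC : e1 * ((2*L - 1) * nn - 2*L) ≤ (2 - L) * (δ * N * (nn - 2)) := by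
    nlinarith only [hA, hB]
  have hD : nn / 5 ≤ (2*L - 1) * nn - 2*L := by
    nlinarith only [mul_nonneg (by linarith : (0:ℝ) ≤ 2*L - 1 - 1/4) hnnpos.le, hnn0, hL2]
  have hF : (2 - L) * (δ * N * (nn - 2)) ≤ (11/8) * (δ * N * nn) := by
    nlinarith only [mul_nonneg (mul_nonneg hDN0 hnnpos.le) (by linarith : (0:ℝ) ≤ L - 5/8),
      mul_nonneg hDN0 (by linarith : (0:ℝ) ≤ 2 - L)]
  have hG : e1 * (nn / 5) ≤ (11/8) * (δ * N * nn) :=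
    le_trans (mul_le_mul_of_nonneg_left hD he1) (le_trans hC hF)
  have hS2 : e1 ≤ 7 * (δ * N) := by
    by_contra hcon
    push_neg at hcon
    have h7 := mul_lt_mul_of_pos_right hcon hnnpos
    nlinarith only [hG, h7, mul_nonneg hDN0 hnnpos.le]
  -- Step 4: e3 ≤ 15 δ N
  have hS3 : e3 ≤ 15 * (δ * N) := by
    have h1 : e1 * nn ≤ 7 * (δ * N) * nn := mul_le_mul_of_nonneg_right hS2 hnnpos.le
    have h2 : nn ≤ 2 * (nn - 2) := by linarith
    by_contra hcon
    push_neg at hcon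
    have h3 := mul_lt_mul_of_pos_right hcon (by linarith : (0:ℝ) < nn - 2)
    nlinarith only [hS1, h1, h3, mul_le_mul_of_nonneg_left h2 hDN0, hDN0]
  -- Step 5: per-colour cube bound (in terms of a_i)
  have hcube1 : 6 * t1 ≤ s * nn * a1^2 + 6 * a1^2 + 12 * nn + 8 := by
    nlinarith only [hc1, mul_nonneg (mul_nonneg (sub_nonneg.2 ha1s) ha1) ha1, ha1n, ha1, hsq1, hm1]
  have hcube2 : 6 * t2 ≤ s * nn * a2^2 + 6 * a2^2 + 12 * nn + 8 := by
    nlinarith only [hc2, mul_nonneg (mul_nonneg (sub_nonneg.2 ha2s) ha2) ha2, ha2n, ha2, hsq2, hm2]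
  have hcube3 : 6 * t3 ≤ s * nn * a3^2 + 6 * a3^2 + 12 * nn + 8 := by
    nlinarith only [hc3, mul_nonneg (mul_nonneg (sub_nonneg.2 ha3s) ha3) ha3, ha3n, ha3, hsq3, hm3]
  -- Step 6: sum of cube bounds
  have hsqsum : a1^2 + a2^2 + a3^2 ≤ 2 * N := by linarith [hsq1, hsq2, hsq3, hmsum]
  have hsnn : (0:ℝ) ≤ s * nn := mul_nonneg hs0 hnnpos.le
  have hsum : 6 * (t1 + t2 + t3) ≤ 2 * (s * nn * N) + 12 * N + 36 * nn + 24 := by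
    nlinarith only [hcube1, hcube2, hcube3, mul_le_mul_of_nonneg_left hsqsum hsnn, hsq1, hsq2, hsq3, hmsum]
  -- Step 7: lower bound on t1+t2+t3
  have hlow : T - 22 * (δ * N) * nn - δ * T ≤ t1 + t2 + t3 := by
    have h1 : (e1 + e3) * nn ≤ 22 * (δ * N) * nn :=
      mul_le_mul_of_nonneg_right (by linarith) hnnpos.le
    linarith [hdec, hrb, h1]
  -- Step 8: divide by 2N
  have h36 : 36 * nn + 24 ≤ 2 * N := by nlinarith only [hN2, hnn0]
  have hIneq : (nn - 2) * (2 * N) ≤ (s * nn + 67 * (δ * nn) + 7) * (2 * N) := by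
    nlinarith only [hsum, hlow, hδT3, hT3, h36, mul_nonneg hDN0 hnnpos.le, hnn0, hN0]
  have hmain : nn - 2 ≤ s * nn + 67 * (δ * nn) + 7 :=
    le_of_mul_le_mul_right hIneq (by linarith)
  have hsnn2 : s * nn ≤ (1 - ε'/2) * nn := mul_le_mul_of_nonneg_right hs1 hnnpos.le
  rw [hδ] at hmain
  nlinarith only [hmain, hsnn2, hnn, hnnpos, hε'pos]

end Endgame

section Final
variable {n : ℕ}

lemma rainbowTriples_eq (t : Template 3 n) : rainbowTriples t = (RBf t).card := by
  have hset : {p : Fin n × Fin n × Fin n |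
      ∃ (hxy : p.1 < p.2.1) (hyz : p.2.1 < p.2.2),
        ∃ a ∈ t ⟨(p.1, p.2.1), hxy⟩, ∃ b ∈ t ⟨(p.2.1, p.2.2), hyz⟩,
          ∃ d ∈ t ⟨(p.1, p.2.2), hxy.trans hyz⟩, a ≠ b ∧ b ≠ d ∧ a ≠ d}
      = ↑(RBf t) := by
    ext p
    simp only [Set.mem_setOf_eq, mem_coe, mem_RBf t, rbPred, RbP]
  rw [rainbowTriples, hset, Set.ncard_coe_finset]

/-- Stability for rainbow-triangle-free 3-colourings (Theorem 4.15). -/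
theorem rainbow_free_stability (ε : ℝ) (hε : 0 < ε) :
    ∃ (δ : ℝ) (n₀ : ℕ), 0 < δ ∧ ∀ n, n₀ ≤ n → ∀ t : Template 3 n, Proper t →
      (Real.logb 3 2 - δ) * (n.choose 2 : ℝ) ≤ Ent t →
      (rainbowTriples t : ℝ) ≤ δ * (n.choose 3 : ℝ) →
      ∃ c₁ c₂ : Fin 3, c₁ ≠ c₂ ∧
        (({e : Edge n | t e ≠ {c₁, c₂}}).ncard : ℝ) ≤ ε * (n.choose 2 : ℝ) := by
  classical
  set ε' := min ε 1 with hε'def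
  have hε'pos : 0 < ε' := lt_min hε one_pos
  have hε'le1 : ε' ≤ 1 := min_le_right _ _
  have hε'leε : ε' ≤ ε := min_le_left _ _
  refine ⟨ε' / 1000, ⌈(10000:ℝ)/ε'⌉₊ + 2, by positivity, ?_⟩
  intro n hn t hProper hEnt hRb
  by_contra hcon
  push_neg at hcon
  -- basic facts about n
  have hnR : (10000:ℝ)/ε' ≤ (n:ℝ) := by
    calc (10000:ℝ)/ε' ≤ (⌈(10000:ℝ)/ε'⌉₊ : ℝ) := Nat.le_ceil _
      _ ≤ n := by exact_mod_cast le_trans (Nat.le_add_right _ 2) hn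
  have h10 : (10000:ℝ) ≤ 10000/ε' := by
    rw [le_div_iff₀ hε'pos]
    nlinarith
  have hnn0 : (10000:ℝ) ≤ n := le_trans h10 hnR
  have hnNat : 10000 ≤ n := by exact_mod_cast hnn0
  have hnn : (10000:ℝ) ≤ n * ε' := by
    have := mul_le_mul_of_nonneg_right hnR hε'pos.le
    rwa [div_mul_cancel₀ _ (ne_of_gt hε'pos)] at this
  -- the m_P bounds coming from the contradiction hypothesis
  have hMlt : ∀ (c1 c2 : Fin 3), c1 ≠ c2 →
      ((GP t {c1, c2}).card : ℝ) < (1 - ε') * (n.choose 2 : ℝ) := by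
    intro c1 c2 hne
    have hGPle : (GP t {c1, c2}).card ≤ n.choose 2 :=
      le_trans (card_le_card (filter_subset _ _)) (le_of_eq (card_edge_univ n))
    have hcards := Finset.card_filter_add_card_filter_not
      (s := (univ : Finset (Edge n))) (p := fun e => t e = ({c1, c2} : Finset (Fin 3)))
    have hcard : (univ.filter (fun e : Edge n => ¬(t e = {c1, c2}))).card
        = n.choose 2 - (GP t {c1, c2}).card := by
      have hGP : (GP t {c1, c2}).card
          = (univ.filter (fun e : Edge n => t e = {c1, c2})).card := rfl
      rw [card_edge_univ n] at hcards
      omega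
    have hthis := hcon c1 c2 hne
    have hset : {e : Edge n | t e ≠ {c1, c2}}
        = ↑(univ.filter (fun e : Edge n => ¬(t e = {c1, c2}))) := by
      ext e
      simp only [Set.mem_setOf_eq, coe_filter, mem_univ, true_and, ne_eq]
    rw [hset, Set.ncard_coe_finset, hcard, Nat.cast_sub hGPle] at hthis
    have hNnn : (0:ℝ) ≤ (n.choose 2 : ℝ) := Nat.cast_nonneg _
    nlinarith [hthis, mul_nonneg (sub_nonneg.2 hε'leε) hNnn]
  -- sqrt setup
  set s := Real.sqrt (1 - ε') with hsdef
  have hs0 : 0 ≤ s := Real.sqrt_nonneg _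
  have hssq : s ^ 2 = 1 - ε' := Real.sq_sqrt (by linarith)
  have hs1 : s ≤ 1 - ε' / 2 := by
    have h1 : s ≤ Real.sqrt ((1 - ε' / 2) ^ 2) := Real.sqrt_le_sqrt (by nlinarith)
    rwa [Real.sqrt_sq (by linarith)] at h1
  have hsqrtP : ∀ (c1 c2 : Fin 3), c1 ≠ c2 →
      Real.sqrt (2 * ((GP t {c1, c2}).card : ℝ)) ≤ s * n ∧
      Real.sqrt (2 * ((GP t {c1, c2}).card : ℝ)) ≤ n ∧
      Real.sqrt (2 * ((GP t {c1, c2}).card : ℝ)) ^ 2 = 2 * ((GP t {c1, c2}).card : ℝ) := by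
    intro c1 c2 hne
    have hm0 : (0:ℝ) ≤ 2 * ((GP t {c1, c2}).card : ℝ) := by positivity
    have hN2 : ((n.choose 2 : ℕ) : ℝ) * 2 = (n:ℝ) * ((n:ℝ) - 1) := by
      have h := Nat.choose_succ_right_eq n 1
      rw [Nat.choose_one_right] at h
      norm_num at h
      have : ((n.choose 2 * 2 : ℕ) : ℝ) = ((n * (n - 1) : ℕ) : ℝ) := by rw [h]
      push_cast [Nat.cast_sub (by omega : 1 ≤ n)] at this
      linarith
    have hmlt := hMlt c1 c2 hne
    refine ⟨?_, ?_, Real.sq_sqrt hm0⟩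
    · have hle : 2 * ((GP t {c1, c2}).card : ℝ) ≤ (s * n) ^ 2 := by
        rw [mul_pow, hssq]
        nlinarith [hmlt, hnn0]
      calc Real.sqrt (2 * ((GP t {c1, c2}).card : ℝ)) ≤ Real.sqrt ((s * n) ^ 2) :=
            Real.sqrt_le_sqrt hle
        _ = s * n := Real.sqrt_sq (by positivity)
    · have hle : 2 * ((GP t {c1, c2}).card : ℝ) ≤ ((n:ℝ)) ^ 2 := by
        nlinarith [hmlt, hnn0, hε'pos]
      calc Real.sqrt (2 * ((GP t {c1, c2}).card : ℝ)) ≤ Real.sqrt (((n:ℝ)) ^ 2) :=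
            Real.sqrt_le_sqrt hle
        _ = n := Real.sqrt_sq (by positivity)
  -- cast the counting facts
  have hone : (1:ℕ) ≤ n := by omega
  have htwo : (2:ℕ) ≤ n := by omega
  have hN2R : ((n.choose 2 : ℕ) : ℝ) * 2 = (n:ℝ) * ((n:ℝ) - 1) := by
    have h := Nat.choose_succ_right_eq n 1
    rw [Nat.choose_one_right] at h
    norm_num at h
    have : ((n.choose 2 * 2 : ℕ) : ℝ) = ((n * (n - 1) : ℕ) : ℝ) := by rw [h]
    push_cast [Nat.cast_sub hone] at this
    linarith
  have hT3R : ((n.choose 3 : ℕ) : ℝ) * 3 = ((n.choose 2 : ℕ) : ℝ) * ((n:ℝ) - 2) := by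
    have h := Nat.choose_succ_right_eq n 2
    norm_num at h
    have : ((n.choose 3 * 3 : ℕ) : ℝ) = ((n.choose 2 * (n - 2) : ℕ) : ℝ) := by rw [h]
    push_cast [Nat.cast_sub htwo] at this
    linarith
  have hpartR : ((EC t 1).card : ℝ) + ((EC t 2).card : ℝ) + ((EC t 3).card : ℝ)
      = (n.choose 2 : ℝ) := by
    exact_mod_cast congrArg (Nat.cast (R := ℝ)) (EC_partition t hProper)
  rw [ent_eq t hProper] at hEnt
  rw [rainbowTriples_eq t] at hRb
  have hcfR : ((EC t 3).card : ℝ) * ((n:ℝ) - 2)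
      ≤ 3 * ((RBf t).card : ℝ) + ((EC t 1).card : ℝ) * n := by
    have h := count_full t hProper
    have hc : (((EC t 3).card * (n - 2) : ℕ) : ℝ) ≤ ((3 * (RBf t).card + (EC t 1).card * n : ℕ) : ℝ) :=
      Nat.cast_le.2 h
    push_cast [Nat.cast_sub htwo] at hc
    linarith
  have hdecN : n.choose 3 ≤ ((EC t 1).card + (EC t 3).card) * n + (RBf t).card
      + ((monoT t {0, 1}).card + (monoT t {0, 2}).card + (monoT t {1, 2}).card) := by
    have h1 := tri_decomp t hProper
    have h2 := count_bad t hProper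
    omega
  have hdecR : ((n.choose 3 : ℕ) : ℝ) ≤ (((EC t 1).card : ℝ) + ((EC t 3).card : ℝ)) * n
      + ((RBf t).card : ℝ) + (((monoT t {0, 1}).card : ℝ) + ((monoT t {0, 2}).card : ℝ)
      + ((monoT t {1, 2}).card : ℝ)) := by
    exact_mod_cast Nat.cast_le.2 hdecN
  have hmsumR : ((GP t {0, 1}).card : ℝ) + ((GP t {0, 2}).card : ℝ) + ((GP t {1, 2}).card : ℝ)
      ≤ (n.choose 2 : ℝ) := by exact_mod_cast Nat.cast_le.2 (GP_sum_le t)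
  obtain ⟨ha1s, ha1n, hsq1⟩ := hsqrtP 0 1 (by decide)
  obtain ⟨ha2s, ha2n, hsq2⟩ := hsqrtP 0 2 (by decide)
  obtain ⟨ha3s, ha3n, hsq3⟩ := hsqrtP 1 2 (by decide)
  exact endgame hε'pos hε'le1 rfl logb_lb logb_ub hnn hnn0 hN2R hT3R
    (Nat.cast_nonneg _) (Nat.cast_nonneg _) (Nat.cast_nonneg _)
    hpartR hEnt (Nat.cast_nonneg _) hRb hcfR hdecR
    (Nat.cast_nonneg _) (Nat.cast_nonneg _) (Nat.cast_nonneg _) hmsumR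
    (Real.sqrt_nonneg _) (Real.sqrt_nonneg _) (Real.sqrt_nonneg _)
    ha1s ha2s ha3s ha1n ha2n ha3n hsq1 hsq2 hsq3 hs0 hs1
    (mono_real_bound t {0, 1} hone) (mono_real_bound t {0, 2} hone)
    (mono_real_bound t {1, 2} hone)

end Final
end Defs
end

section
/- Extremal entropy for proper-path 3-colouring templates (non-example for containers on sparse sequences): For every n ≥ 3, the maximum of Ent(t) over all 3-colouring templates t for the path P_n such that every realisation of t has no two consecutive edges of the same colour equals ⌈(n−1)/2⌉·log₃2. -/
/-- A 3-colouring of the edges of the path `P_n`: edge `i` (for `0 ≤ i < n - 1`,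
joining vertices `i` and `i + 1`) receives colour `c i`. -/
abbrev PathCol (n : ℕ) := Fin (n - 1) → Fin 3

/-- A 3-colouring template for the path `P_n`: a nonempty palette at each edge. -/
abbrev PathTemp (n : ℕ) := Fin (n - 1) → Finset (Fin 3)

def PProper {n : ℕ} (t : PathTemp n) : Prop := ∀ e, (t e).Nonempty

def PRealises {n : ℕ} (c : PathCol n) (t : PathTemp n) : Prop := ∀ e, c e ∈ t e

/-- The entropy (base 3) of a path template. -/
noncomputable def PEnt {n : ℕ} (t : PathTemp n) : ℝ :=
  ∑ e : Fin (n - 1), Real.logb 3 ((t e).card)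

/-- No two consecutive edges of the path receive the same colour. -/
def ProperlyColoured {n : ℕ} (c : PathCol n) : Prop :=
  ∀ (i : ℕ) (h : i + 1 < n - 1), c ⟨i, Nat.lt_of_succ_lt h⟩ ≠ c ⟨i + 1, h⟩

lemma count_evens (m : ℕ) :
    ((Finset.range m).filter (fun i => i % 2 = 0)).card = (m + 1) / 2 := by
  induction m with
  | zero => simp
  | succ m ih =>
    rw [Finset.range_add_one, Finset.filter_insert]
    by_cases h : m % 2 = 0
    · rw [if_pos h, Finset.card_insert_of_notMem (by simp), ih]
      omega
    · rw [if_neg h, ih]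
      omega

lemma consec_card {n : ℕ} (t : PathTemp n) (ht : PProper t)
    (hr : ∀ c, PRealises c t → ProperlyColoured c)
    (i : ℕ) (h : i + 1 < n - 1) :
    (t ⟨i, Nat.lt_of_succ_lt h⟩).card + (t ⟨i + 1, h⟩).card ≤ 3 := by
  classical
  set e0 : Fin (n - 1) := ⟨i, Nat.lt_of_succ_lt h⟩ with he0
  set e1 : Fin (n - 1) := ⟨i + 1, h⟩ with he1
  have hdisj : Disjoint (t e0) (t e1) := by
    rw [Finset.disjoint_left]
    intro a ha0 ha1
    set c : PathCol n := fun e => if e = e0 ∨ e = e1 then a else (ht e).choose with hc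
    have hreal : PRealises c t := by
      intro e
      by_cases he : e = e0 ∨ e = e1
      · simp only [hc, if_pos he]
        rcases he with rfl | rfl
        · exact ha0
        · exact ha1
      · simp only [hc, if_neg he]
        exact (ht e).choose_spec
    have hne := hr c hreal i h
    apply hne
    show c e0 = c e1
    simp [hc]
  have key : (t e0 ∪ t e1).card ≤ 3 := by
    have := Finset.card_le_univ (t e0 ∪ t e1)
    simpa using this
  rw [← Finset.card_union_of_disjoint hdisj]
  exact key

lemma each_card {n : ℕ} (hn : 3 ≤ n) (t : PathTemp n) (ht : PProper t)
    (hr : ∀ c, PRealises c t → ProperlyColoured c) (e : Fin (n - 1)) :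
    (t e).card ≤ 2 := by
  by_cases h : e.val + 1 < n - 1
  · have := consec_card t ht hr e.val h
    have h1 : 1 ≤ (t ⟨e.val + 1, h⟩).card := (ht _).card_pos
    have he : (⟨e.val, Nat.lt_of_succ_lt h⟩ : Fin (n - 1)) = e := by
      ext; rfl
    rw [he] at this
    omega
  · -- e is the last edge; use the previous one
    have hm : 2 ≤ n - 1 := by omega
    have hev : e.val = n - 2 := by
      have := e.isLt
      omega
    have hi : (e.val - 1) + 1 < n - 1 := by omega
    have := consec_card t ht hr (e.val - 1) hi
    have he : (⟨(e.val - 1) + 1, hi⟩ : Fin (n - 1)) = e := by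
      ext
      simp
      omega
    rw [he] at this
    have h1 : 1 ≤ (t ⟨e.val - 1, Nat.lt_of_succ_lt hi⟩).card := (ht _).card_pos
    omega

/-- Extremal entropy for proper-path 3-colouring templates (the non-example of
Section 4.7): the maximum entropy of a 3-colouring template for `P_n` all of whose
realisations have no two consecutive edges of the same colour equals
`⌈(n-1)/2⌉·log₃ 2`. -/
theorem path_extremal_entropy (n : ℕ) (hn : 3 ≤ n) :
    sSup {x : ℝ | ∃ t : PathTemp n, PProper t ∧
        (∀ c, PRealises c t → ProperlyColoured c) ∧ PEnt t = x} =
      (((n - 1 + 1) / 2 : ℕ) : ℝ) * Real.logb 3 2 := by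
  classical
  set m := n - 1 with hm
  have hm2 : 2 ≤ m := by omega
  set k : ℕ := (m + 1) / 2 with hk
  set v : ℝ := (k : ℝ) * Real.logb 3 2 with hv
  have hlogpos : (0 : ℝ) ≤ Real.logb 3 2 := by
    apply Real.logb_nonneg <;> norm_num
  -- the extremal template
  set t0 : PathTemp n := fun e => if e.val % 2 = 0 then ({0, 1} : Finset (Fin 3)) else {2}
    with ht0
  have ht0card : ∀ e : Fin (n - 1), (t0 e).card = if e.val % 2 = 0 then 2 else 1 := by
    intro e
    by_cases h : e.val % 2 = 0 <;> simp [ht0, h]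
  have ht0proper : PProper t0 := by
    intro e
    rw [← Finset.card_pos, ht0card]
    by_cases h : e.val % 2 = 0 <;> simp [h]
  have ht0real : ∀ c, PRealises c t0 → ProperlyColoured c := by
    intro c hc i h
    have h0 := hc ⟨i, Nat.lt_of_succ_lt h⟩
    have h1 := hc ⟨i + 1, h⟩
    by_cases hpar : i % 2 = 0
    · have hpar1 : (i + 1) % 2 ≠ 0 := by omega
      simp [ht0, hpar, hpar1] at h0 h1
      intro heq
      rw [heq, h1] at h0
      rcases h0 with h0 | h0 <;> exact absurd h0 (by decide)
    · have hpar1 : (i + 1) % 2 = 0 := by omega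
      simp [ht0, hpar, hpar1] at h0 h1
      intro heq
      rw [← heq, h0] at h1
      rcases h1 with h1 | h1 <;> exact absurd h1 (by decide)
  have ht0ent : PEnt t0 = v := by
    have : ∀ e : Fin (n - 1),
        Real.logb 3 ((t0 e).card) = if e.val % 2 = 0 then Real.logb 3 2 else 0 := by
      intro e
      rw [ht0card]
      by_cases h : e.val % 2 = 0 <;> simp [h]
    rw [PEnt]
    simp_rw [this]
    rw [Fin.sum_univ_eq_sum_range (fun i => if i % 2 = 0 then Real.logb 3 2 else 0)]
    rw [Finset.sum_ite, Finset.sum_const, Finset.sum_const_zero, add_zero,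
      nsmul_eq_mul, count_evens]
  have hmem : v ∈ {x : ℝ | ∃ t : PathTemp n, PProper t ∧
      (∀ c, PRealises c t → ProperlyColoured c) ∧ PEnt t = x} :=
    ⟨t0, ht0proper, ht0real, ht0ent⟩
  -- upper bound
  have hub : ∀ x ∈ {x : ℝ | ∃ t : PathTemp n, PProper t ∧
      (∀ c, PRealises c t → ProperlyColoured c) ∧ PEnt t = x}, x ≤ v := by
    rintro x ⟨t, ht, hr, rfl⟩
    have hcard12 : ∀ e : Fin (n - 1), (t e).card = 1 ∨ (t e).card = 2 := by
      intro e
      have h1 := (ht e).card_pos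
      have h2 := each_card hn t ht hr e
      omega
    have hterm : ∀ e : Fin (n - 1),
        Real.logb 3 ((t e).card) = if (t e).card = 2 then Real.logb 3 2 else 0 := by
      intro e
      rcases hcard12 e with h | h <;> rw [h] <;> simp
    set S : Finset (Fin (n - 1)) := Finset.univ.filter (fun e => (t e).card = 2) with hS
    have hent : PEnt t = (S.card : ℝ) * Real.logb 3 2 := by
      rw [PEnt]
      simp_rw [hterm]
      rw [Finset.sum_ite, Finset.sum_const, Finset.sum_const_zero, add_zero, nsmul_eq_mul]
    have hScard : S.card ≤ k := by
      have : S.card ≤ (Finset.range k).card := by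
        apply Finset.card_le_card_of_injOn (fun e => e.val / 2)
        · intro e he
          simp only [Finset.mem_coe, Finset.mem_range]
          have := e.isLt
          omega
        · intro a ha b hb hab
          by_contra hne
          -- wlog a.val < b.val
          have key : ∀ p q : Fin (n - 1), p ∈ S → q ∈ S → p.val < q.val →
              p.val / 2 = q.val / 2 → False := by
            intro p q hp hq hlt hdiv
            have hq1 : q.val = p.val + 1 := by omega
            have hcons : p.val + 1 < n - 1 := by
              have := q.isLt
              omega
            have h3 := consec_card t ht hr p.val hcons
            simp only [hS, Finset.mem_filter] at hp hq
            have hep : (⟨p.val, Nat.lt_of_succ_lt hcons⟩ : Fin (n - 1)) = p := by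
              ext; rfl
            have heq : (⟨p.val + 1, hcons⟩ : Fin (n - 1)) = q := by
              ext; simp [hq1]
            rw [hep, heq] at h3
            omega
          rcases lt_trichotomy a.val b.val with h | h | h
          · exact key a b ha hb h hab
          · exact hne (Fin.ext h)
          · exact key b a hb ha h hab.symm
      simpa using this
    rw [hent, hv]
    apply mul_le_mul_of_nonneg_right _ hlogpos
    exact_mod_cast hScard
  have hne : {x : ℝ | ∃ t : PathTemp n, PProper t ∧
      (∀ c, PRealises c t → ProperlyColoured c) ∧ PEnt t = x}.Nonempty := ⟨v, hmem⟩
  have : sSup {x : ℝ | ∃ t : PathTemp n, PProper t ∧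
      (∀ c, PRealises c t → ProperlyColoured c) ∧ PEnt t = x} = v := by
    apply le_antisymm
    · exact csSup_le hne hub
    · exact le_csSup ⟨v, hub⟩ hmem
  rw [this, hv, hk, hm]
end
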